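/- arXiv:2306.06383 — 8 statements merged into one kernel-verified Lean document; each statement's English description precedes it below -/
import Mathlib

section
/- Let n ≥ 2 and s ≥ 2, and let D be a positive basis of ℝ^n with n+s elements. Then D is an orthogonally structured positive basis if and only if there exists an ordering of the elements of D into a matrix representation D ∈ ℝ^{n×(n+s)} such that the Gram matrix G(D) = DᵀD is block diagonal with s diagonal blocks. -/
open scoped RealInnerProductSpace

noncomputable section

/-- Shorthand for the Euclidean space `ℝ^n`. -/
abbrev Euc (n : ℕ) := EuclideanSpace ℝ (Fin n)

/-- The positive span of a finite family of vectors: the set of all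
linear combinations with nonnegative coefficients. -/
def pspan {n : ℕ} {ι : Type*} [Fintype ι] (D : ι → Euc n) : Set (Euc n) :=
  { x | ∃ c : ι → ℝ, (∀ i, 0 ≤ c i) ∧ x = ∑ i, c i • D i }

/-- `D` is a positive spanning set (PSS) of the subspace `L`. -/
def IsPSS {n : ℕ} {ι : Type*} [Fintype ι] (D : ι → Euc n)
    (L : Submodule ℝ (Euc n)) : Prop :=
  pspan D = (L : Set (Euc n))

/-- `D` is a positive basis of `L`: a PSS of `L` such that removing any single
element (one instance of it) destroys the positive spanning property. -/
def IsPosBasis {n : ℕ} {ι : Type*} [Fintype ι] [DecidableEq ι] (D : ι → Euc n)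
    (L : Submodule ℝ (Euc n)) : Prop :=
  IsPSS D L ∧ ∀ i : ι, ¬ IsPSS (fun j : {j : ι // j ≠ i} => D j) L

/-- `D` is a minimal positive basis of `L`: a positive basis with `dim L + 1` elements. -/
def IsMinPosBasis {n : ℕ} {ι : Type*} [Fintype ι] [DecidableEq ι] (D : ι → Euc n)
    (L : Submodule ℝ (Euc n)) : Prop :=
  IsPosBasis D L ∧ Fintype.card ι = Module.finrank ℝ L + 1

/-- The positive `k`-span of a finite family `D`: the intersection of the positive
spans of all of its subfamilies of cardinality at least `|D| - k + 1`. -/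
def pspanK {n : ℕ} {ι : Type*} [Fintype ι] (k : ℕ) (D : ι → Euc n) : Set (Euc n) :=
  ⋂ (S : Finset ι) (_ : Fintype.card ι - k + 1 ≤ S.card),
    pspan (fun j : {j : ι // j ∈ S} => D (j : ι))

/-- `D` is a positive `k`-spanning set (PkSS) of `L`. -/
def IsPkSS {n : ℕ} {ι : Type*} [Fintype ι] (k : ℕ) (D : ι → Euc n)
    (L : Submodule ℝ (Euc n)) : Prop :=
  pspanK k D = (L : Set (Euc n))

/-- The `k`-span of a finite family `D`: the intersection of the linear spans of
all of its subfamilies of cardinality at least `|D| - k + 1`. -/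
def spanK {n : ℕ} {ι : Type*} [Fintype ι] (k : ℕ) (D : ι → Euc n) : Set (Euc n) :=
  ⋂ (S : Finset ι) (_ : Fintype.card ι - k + 1 ≤ S.card),
    (Submodule.span ℝ (D '' (S : Set ι)) : Set (Euc n))

/-- `D` is a positive `k`-basis of `L`: a PkSS of `L` such that removing any single
element destroys the positive `k`-spanning property. -/
def IsPkBasis {n : ℕ} {ι : Type*} [Fintype ι] [DecidableEq ι] (k : ℕ) (D : ι → Euc n)
    (L : Submodule ℝ (Euc n)) : Prop :=
  IsPkSS k D L ∧ ∀ i : ι, ¬ IsPkSS k (fun j : {j : ι // j ≠ i} => D j) L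

/-- The cosine measure of a finite family of nonzero vectors. -/
def cosm {n : ℕ} {ι : Type*} [Fintype ι] (D : ι → Euc n) : ℝ :=
  ⨅ u : {u : Euc n // ‖u‖ = 1}, ⨆ i : ι, ⟪(u : Euc n), D i⟫ / ‖D i‖

/-- The `k`-cosine measure of a finite family of nonzero vectors. -/
def cosmK {n : ℕ} {ι : Type*} [Fintype ι] (k : ℕ) (D : ι → Euc n) : ℝ :=
  ⨅ u : {u : Euc n // ‖u‖ = 1},
    ⨆ S : {S : Finset ι // S.card = k},
      ⨅ j : {j : ι // j ∈ (S : Finset ι)}, ⟪(u : Euc n), D (j : ι)⟫ / ‖D (j : ι)‖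

/-- The cosine vector set: the unit vectors attaining the cosine measure. -/
def cosVSet {n : ℕ} {ι : Type*} [Fintype ι] (D : ι → Euc n) : Set (Euc n) :=
  { u | ‖u‖ = 1 ∧ (⨆ i : ι, ⟪u, D i⟫ / ‖D i‖) = cosm D }

/-- `D` is orthogonally structured with decomposition given by the pairwise orthogonal
subspaces `L i` (whose sum is `ℝ^n`) and the grouping map `g`: the subfamily of `D`
corresponding to each fiber of `g` is a minimal positive basis of the associated subspace. -/
def IsOSPBDecomp {n s : ℕ} {ι : Type*} [Fintype ι] [DecidableEq ι] (D : ι → Euc n)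
    (L : Fin s → Submodule ℝ (Euc n)) (g : ι → Fin s) : Prop :=
  (∀ i i' : Fin s, i ≠ i' → ∀ x ∈ L i, ∀ y ∈ L i', ⟪x, y⟫ = 0) ∧
  (⨆ i, L i) = (⊤ : Submodule ℝ (Euc n)) ∧
  ∀ i : Fin s, IsMinPosBasis (fun j : {j : ι // g j = i} => D (j : ι)) (L i)

/-- The Gram matrix `G(B) = BᵀB` of the subfamily of `D` indexed by `S`. -/
def gramSub {n : ℕ} {ι : Type*} [Fintype ι] (D : ι → Euc n) (S : Finset ι) :
    Matrix {j : ι // j ∈ S} {j : ι // j ∈ S} ℝ :=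
  Matrix.of fun j j' => ⟪D (j : ι), D (j' : ι)⟫

/-- The quantity `γ_B = 1/√(1ᵀ G(B)⁻¹ 1)` associated with the subfamily of `D`
indexed by `S`. -/
def gammaSub {n : ℕ} {ι : Type*} [Fintype ι] [DecidableEq ι] (D : ι → Euc n)
    (S : Finset ι) : ℝ :=
  1 / Real.sqrt (∑ j : {j : ι // j ∈ S}, ∑ j' : {j : ι // j ∈ S}, (gramSub D S)⁻¹ j j')

/-- The subfamily of `D` indexed by `S` is a linear basis of `L`. -/
def IsBasisSub {n : ℕ} {ι : Type*} [Fintype ι] (D : ι → Euc n) (S : Finset ι)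
    (L : Submodule ℝ (Euc n)) : Prop :=
  LinearIndependent ℝ (fun j : {j : ι // j ∈ S} => D (j : ι)) ∧
  Submodule.span ℝ (D '' (S : Set ι)) = L

/-- `R` is a rotation matrix: `RᵀR = I` and `det R = 1`. -/
def IsRotation {n : ℕ} (R : Matrix (Fin n) (Fin n) ℝ) : Prop :=
  R.transpose * R = 1 ∧ R.det = 1

/-- Action of an `n × n` matrix on the Euclidean space `ℝ^n`. -/
def rotAct {n : ℕ} (R : Matrix (Fin n) (Fin n) ℝ) (x : Euc n) : Euc n :=
  Matrix.toEuclideanLin R x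

/-- The quantity `ρ_D` of Lemma 4.13, where `P i i'` denotes the orthogonal projection
of `d_i` onto `L ∩ {v_{i'}}^⊥`. -/
def rhoQ {n : ℕ} {ι : Type*} [Fintype ι] (D : ι → Euc n) (P : ι → ι → Euc n) : ℝ :=
  ⨆ p : ι × ι, ⟪D p.1, P p.1 p.2⟫ / (‖D p.1‖ * ‖P p.1 p.2‖)


section Aux

variable {n : ℕ} {ι : Type*} [Fintype ι]

lemma mem_pspan_self (D : ι → Euc n) (i : ι) : D i ∈ pspan D := by
  classical
  refine ⟨fun j => if j = i then 1 else 0, fun j => by by_cases hji : j = i <;> simp [hji], ?_⟩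
  simp [ite_smul]

lemma pspan_subset {D : ι → Euc n} {L : Submodule ℝ (Euc n)} (h : ∀ i, D i ∈ L) :
    pspan D ⊆ (L : Set (Euc n)) := by
  rintro x ⟨c, hc, rfl⟩
  exact Submodule.sum_mem _ fun i _ => Submodule.smul_mem _ _ (h i)

lemma pspan_add {D : ι → Euc n} {x y : Euc n} (hx : x ∈ pspan D) (hy : y ∈ pspan D) :
    x + y ∈ pspan D := by
  obtain ⟨c, hc, rfl⟩ := hx; obtain ⟨c', hc', rfl⟩ := hy
  exact ⟨c + c', fun i => add_nonneg (hc i) (hc' i),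
    by simp [add_smul, Finset.sum_add_distrib]⟩

lemma pspan_comp_subset {κ : Type*} [Fintype κ] (D : ι → Euc n) (f : κ → ι) :
    pspan (fun k => D (f k)) ⊆ pspan D := by
  classical
  rintro x ⟨c, hc, rfl⟩
  refine ⟨fun j => ∑ k ∈ Finset.univ.filter (fun k => f k = j), c k,
    fun j => Finset.sum_nonneg fun k _ => hc k, ?_⟩
  rw [← Finset.sum_fiberwise_of_maps_to (fun k _ => Finset.mem_univ (f k))
    (fun k => c k • D (f k))]
  refine Finset.sum_congr rfl fun j _ => ?_
  rw [Finset.sum_smul]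
  refine Finset.sum_congr rfl fun k hk => ?_
  rw [(Finset.mem_filter.mp hk).2]

lemma span_eq_of_pspan_eq {D : ι → Euc n} {L : Submodule ℝ (Euc n)}
    (h : pspan D = (L : Set (Euc n))) :
    Submodule.span ℝ (Set.range D) = L := by
  classical
  apply le_antisymm
  · rw [Submodule.span_le]
    rintro _ ⟨i, rfl⟩
    have := mem_pspan_self D i
    rw [h] at this
    exact this
  · intro x hx
    have : x ∈ pspan D := by rw [h]; exact hx
    obtain ⟨c, hc, rfl⟩ := this
    exact Submodule.sum_mem _ fun i _ =>
      Submodule.smul_mem _ _ (Submodule.subset_span ⟨i, rfl⟩)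

lemma finrank_lt_card_of_pspan_eq {κ : Type*} [Fintype κ] (v : κ → Euc n)
    {L : Submodule ℝ (Euc n)} (hL : L ≠ ⊥) (h : pspan v = (L : Set (Euc n))) :
    Module.finrank ℝ L + 1 ≤ Fintype.card κ := by
  classical
  have hspan := span_eq_of_pspan_eq h
  have hne : Nonempty κ := by
    by_contra hne
    have : IsEmpty κ := not_nonempty_iff.mp hne
    apply hL
    apply le_antisymm _ bot_le
    intro x hx
    have : x ∈ pspan v := by rw [h]; exact hx
    obtain ⟨c, hc, rfl⟩ := this
    simp [Finset.univ_eq_empty]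
  have hle : Module.finrank ℝ L ≤ Fintype.card κ := by
    have := finrank_range_le_card (R := ℝ) v
    rwa [Set.finrank, hspan] at this
  rcases lt_or_eq_of_le hle with hlt | heq
  · omega
  · exfalso
    have hli : LinearIndependent ℝ v := by
      rw [linearIndependent_iff_card_eq_finrank_span, Set.finrank, hspan]
      exact heq.symm
    have hwL : -(∑ k, v k) ∈ L := by
      refine Submodule.neg_mem _ (Submodule.sum_mem _ fun k _ => ?_)
      have := mem_pspan_self v k
      rwa [h] at this
    have : -(∑ k, v k) ∈ pspan v := by rw [h]; exact hwL
    obtain ⟨c, hc, hw⟩ := this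
    have hzero : ∑ k, (c k + 1) • v k = 0 := by
      simp only [add_smul, one_smul, Finset.sum_add_distrib]
      rw [← hw]
      abel
    have hall := Fintype.linearIndependent_iff.mp hli (fun k => c k + 1) hzero
    obtain ⟨k⟩ := hne
    have h1 : c k + 1 = 0 := hall k
    have h2 := hc k
    linarith

lemma finrank_finset_sup_le {α : Type*} [DecidableEq α] (t : Finset α)
    (L : α → Submodule ℝ (Euc n)) :
    Module.finrank ℝ ↥(t.sup L) ≤ ∑ i ∈ t, Module.finrank ℝ (L i) := by
  induction t using Finset.induction with
  | empty => simp
  | @insert a t ha ih =>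
    rw [Finset.sup_insert, Finset.sum_insert ha]
    have h1 := Submodule.finrank_sup_add_finrank_inf_eq (L a) (t.sup L)
    omega

end Aux

/-- Theorem 3.2: a positive basis of `ℝ^n` with `n+s` elements
(`n, s ≥ 2`) is orthogonally structured iff one of its Gram matrices (i.e. the Gram
matrix of some reordering of its elements) is block diagonal with `s` diagonal blocks. -/
theorem ospb_iff_gram_block_diagonal {n s : ℕ} (hn : 2 ≤ n) (hs : 2 ≤ s)
    (D : Fin (n + s) → Euc n) (h0 : ∀ i, D i ≠ 0)
    (hD : IsPosBasis D (⊤ : Submodule ℝ (Euc n))) :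
    (∃ (L : Fin s → Submodule ℝ (Euc n)) (g : Fin (n + s) → Fin s),
        IsOSPBDecomp D L g) ↔
      ∃ (σ : Equiv.Perm (Fin (n + s))) (b : Fin (n + s) → Fin s),
        Monotone b ∧ Function.Surjective b ∧
        ∀ j j' : Fin (n + s), b j ≠ b j' → ⟪D (σ j), D (σ j')⟫ = 0 := by
  classical
  constructor
  · rintro ⟨L, g, hOrth, hSup, hMin⟩
    refine ⟨Tuple.sort g, g ∘ Tuple.sort g, Tuple.monotone_sort g, ?_, ?_⟩
    · intro i
      have hcard : 0 < Fintype.card {j // g j = i} := by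
        rw [(hMin i).2]; omega
      obtain ⟨⟨j, hj⟩⟩ := Fintype.card_pos_iff.mp hcard
      exact ⟨(Tuple.sort g).symm j, by simp [hj]⟩
    · intro j j' hne
      have hmem : ∀ j : Fin (n+s), D j ∈ L (g j) := fun j => by
        have h1 := (hMin (g j)).1.1
        have h2 := mem_pspan_self (fun k : {k // g k = g j} => D (k : Fin (n+s))) ⟨j, rfl⟩
        rw [h1] at h2
        exact h2
      exact hOrth _ _ hne _ (hmem _) _ (hmem _)
  · rintro ⟨σ, b, hmono, hsurj, horth⟩
    set g : Fin (n+s) → Fin s := b ∘ σ.symm with hg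
    set L : Fin s → Submodule ℝ (Euc n) :=
      fun i => Submodule.span ℝ (Set.range (fun j : {j // g j = i} => D (j : Fin (n+s))))
      with hLdef
    have hDmem : ∀ j, D j ∈ L (g j) := fun j => Submodule.subset_span ⟨⟨j, rfl⟩, rfl⟩
    have hDmem' : ∀ (i : Fin s) (j : Fin (n+s)), g j = i → D j ∈ L i := by
      rintro i j rfl; exact hDmem j
    have hOrtho : ∀ i i', i ≠ i' → L i ⟂ L i' := by
      intro i i' hii
      apply Submodule.isOrtho_span.mpr
      rintro _ ⟨⟨j, hj⟩, rfl⟩ _ ⟨⟨j', hj'⟩, rfl⟩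
      have hbb : b (σ.symm j) ≠ b (σ.symm j') := by
        simp only [hg, Function.comp] at hj hj'
        rw [hj, hj']; exact hii
      have h0 := horth (σ.symm j) (σ.symm j') hbb
      simpa using h0
    have hORT : ∀ i i', i ≠ i' → ∀ x ∈ L i, ∀ y ∈ L i', ⟪x, y⟫ = 0 :=
      fun i i' h x hx y hy => (hOrtho i i' h).inner_eq hx hy
    have hx_pspan : ∀ x : Euc n, x ∈ pspan D := fun x => by
      rw [hD.1]; exact Submodule.mem_top
    -- the fiber families positively span the L i
    have hFiber : ∀ i, pspan (fun j : {j // g j = i} => D (j : Fin (n+s)))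
        = (L i : Set (Euc n)) := by
      intro i
      apply Set.Subset.antisymm
      · exact pspan_subset fun j => hDmem' i j j.2
      · intro x hx
        obtain ⟨c, hc, hxe⟩ := hx_pspan x
        set T : Finset (Fin (n+s)) := Finset.univ.filter (fun j => g j = i) with hT
        set y := ∑ j ∈ T, c j • D j with hy
        set z := ∑ j ∈ Tᶜ, c j • D j with hz
        have hsplit : x = y + z := by
          rw [hy, hz, Finset.sum_add_sum_compl, hxe]
        have hyL : y ∈ L i := Submodule.sum_mem _ fun j hj =>
          Submodule.smul_mem _ _ (hDmem' i j (by simpa [hT] using hj))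
        have hzL : z ∈ L i := by
          have hzxy : z = x - y := by rw [hsplit]; abel
          exact hzxy ▸ Submodule.sub_mem _ hx hyL
        have hzero : z = 0 := by
          have hinner : ⟪z, z⟫ = 0 := by
            have he : ⟪z, z⟫ = ∑ j ∈ Tᶜ, c j * ⟪D j, z⟫ := by
              rw [hz]
              rw [sum_inner]
              exact Finset.sum_congr rfl fun j _ => real_inner_smul_left _ _ _
            rw [he]
            refine Finset.sum_eq_zero fun j hj => ?_
            have hji : g j ≠ i := by
              simp only [hT, Finset.mem_compl, Finset.mem_filter, Finset.mem_univ,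
                true_and] at hj
              exact hj
            rw [hORT (g j) i hji (D j) (hDmem j) z hzL, mul_zero]
          exact inner_self_eq_zero.mp hinner
        have hxy : x = y := by rw [hsplit, hzero, add_zero]
        rw [hxy]
        refine ⟨fun j => c (j : Fin (n+s)), fun j => hc _, ?_⟩
        rw [hy]
        exact Finset.sum_subtype (p := fun j => g j = i) T (by simp [hT])
          (fun j => c j • D j)
    -- removal of one element of a fiber destroys positive spanning of L i
    have hRemove : ∀ (i : Fin s) (k : {j // g j = i}),
        ¬ IsPSS (fun j : {j : {j // g j = i} // j ≠ k} => D ((j : {j // g j = i}) : Fin (n+s)))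
          (L i) := by
      intro i k hPSS
      apply hD.2 (k : Fin (n+s))
      apply Set.Subset.antisymm
      · intro x _; exact Submodule.mem_top
      · intro x _
        obtain ⟨c, hc, hxe⟩ := hx_pspan x
        set T : Finset (Fin (n+s)) := Finset.univ.filter (fun j => g j = i) with hT
        set y := ∑ j ∈ T, c j • D j with hy
        set z := ∑ j ∈ Tᶜ, c j • D j with hz
        have hsplit : x = y + z := by
          rw [hy, hz, Finset.sum_add_sum_compl, hxe]
        have hyL : y ∈ L i := Submodule.sum_mem _ fun j hj =>
          Submodule.smul_mem _ _ (hDmem' i j (by simpa [hT] using hj))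
        have hymem : y ∈ pspan (fun j : {j : Fin (n+s) // j ≠ (k : Fin (n+s))} => D j) := by
          have h1 : y ∈ pspan (fun j : {j : {j // g j = i} // j ≠ k} =>
              D ((j : {j // g j = i}) : Fin (n+s))) := by
            rw [hPSS]; exact hyL
          exact pspan_comp_subset
            (fun j : {j : Fin (n+s) // j ≠ (k : Fin (n+s))} => D j)
            (fun j : {j : {j // g j = i} // j ≠ k} =>
              ⟨((j : {j // g j = i}) : Fin (n+s)), fun hh => j.2 (Subtype.ext hh)⟩) h1
        have hzmem : z ∈ pspan (fun j : {j : Fin (n+s) // j ≠ (k : Fin (n+s))} => D j) := by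
          have h1 : z ∈ pspan (fun j : {j : Fin (n+s) // g j ≠ i} => D (j : Fin (n+s))) := by
            refine ⟨fun j => c (j : Fin (n+s)), fun j => hc _, ?_⟩
            rw [hz]
            exact Finset.sum_subtype (p := fun j => g j ≠ i) Tᶜ (by simp [hT])
              (fun j => c j • D j)
          exact pspan_comp_subset
            (fun j : {j : Fin (n+s) // j ≠ (k : Fin (n+s))} => D j)
            (fun j : {j : Fin (n+s) // g j ≠ i} =>
              ⟨(j : Fin (n+s)), fun hh => j.2 (by rw [hh]; exact k.2)⟩) h1
        rw [hsplit]
        exact pspan_add hymem hzmem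
    -- the subspaces fill the whole space
    have hSup : (⨆ i, L i) = (⊤ : Submodule ℝ (Euc n)) := by
      apply le_antisymm le_top
      intro x _
      obtain ⟨c, hc, hxe⟩ := hx_pspan x
      rw [hxe]
      exact Submodule.sum_mem _ fun j _ => Submodule.smul_mem _ _
        (Submodule.mem_iSup_of_mem (g j) (hDmem j))
    -- fibers are nonempty, so the L i are nonzero
    have hLne : ∀ i, L i ≠ ⊥ := by
      intro i hbot
      obtain ⟨j0, hj0⟩ := hsurj i
      have hgj : g (σ j0) = i := by simp [hg, hj0]
      have hmem := hDmem' i (σ j0) hgj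
      rw [hbot, Submodule.mem_bot] at hmem
      exact h0 (σ j0) hmem
    have hcard_ge : ∀ i, Module.finrank ℝ (L i) + 1 ≤ Fintype.card {j // g j = i} :=
      fun i => finrank_lt_card_of_pspan_eq _ (hLne i) (hFiber i)
    have hsum_rank : n ≤ ∑ i, Module.finrank ℝ (L i) := by
      have h1 : Module.finrank ℝ ↥(⨆ i, L i) = n := by
        rw [hSup, finrank_top, finrank_euclideanSpace, Fintype.card_fin]
      have h2 : (⨆ i, L i) = Finset.univ.sup L := by
        rw [Finset.sup_univ_eq_iSup]
      have h3 := finrank_finset_sup_le (Finset.univ : Finset (Fin s)) L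
      rw [← h2, h1] at h3
      exact h3
    have hsum_card : ∑ i, Fintype.card {j // g j = i} = n + s := by
      have h1 : (Finset.univ : Finset (Fin (n+s))).card
          = ∑ i : Fin s, (Finset.univ.filter (fun j => g j = i)).card :=
        Finset.card_eq_sum_card_fiberwise fun j _ => Finset.mem_univ (g j)
      have h2 : ∀ i : Fin s, Fintype.card {j // g j = i}
          = (Finset.univ.filter (fun j => g j = i)).card := fun i =>
        Fintype.card_subtype _
      rw [Finset.card_univ, Fintype.card_fin] at h1
      calc ∑ i : Fin s, Fintype.card {j // g j = i}
          = ∑ i : Fin s, (Finset.univ.filter (fun j => g j = i)).card :=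
            Finset.sum_congr rfl fun i _ => h2 i
        _ = n + s := h1.symm
    have hcard_eq : ∀ i, Fintype.card {j // g j = i} = Module.finrank ℝ (L i) + 1 := by
      have hsum_le : ∑ i : Fin s, (Module.finrank ℝ (L i) + 1)
          ≤ ∑ i : Fin s, Fintype.card {j // g j = i} :=
        Finset.sum_le_sum fun i _ => hcard_ge i
      have hsum_ge : n + s ≤ ∑ i : Fin s, (Module.finrank ℝ (L i) + 1) := by
        rw [Finset.sum_add_distrib]
        simp only [Finset.sum_const, Finset.card_univ, Fintype.card_fin, smul_eq_mul, mul_one]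
        omega
      have heq : ∑ i : Fin s, (Module.finrank ℝ (L i) + 1)
          = ∑ i : Fin s, Fintype.card {j // g j = i} := by omega
      intro i
      have hterm := (Finset.sum_eq_sum_iff_of_le (fun i _ => hcard_ge i)).mp heq i
        (Finset.mem_univ i)
      omega
    refine ⟨L, g, hORT, hSup, fun i => ⟨⟨hFiber i, fun k => hRemove i k⟩, hcard_eq i⟩⟩
end
end

section
/- Let D be an orthogonally structured positive basis of ℝ^n with decomposition D = D_{𝕃_1} ∪ ⋯ ∪ D_{𝕃_s} into minimal positive bases of pairwise orthogonal subspaces 𝕃_1,…,𝕃_s. Let B = B_{𝕃_1} ∪ ⋯ ∪ B_{𝕃_s}, where each B_{𝕃_i} ⊆ D_{𝕃_i} is a linear basis of 𝕃_i, so that B is a linear basis of ℝ^n. Then γ_B = 1/√( Σ_{i=1}^s γ_{B_{𝕃_i}}^{-2} ) = 1/√( Σ_{i=1}^s 1_{𝕃_i}ᵀ G(B_{𝕃_i})⁻¹ 1_{𝕃_i} ), where γ_{B_{𝕃_i}} = 1/√(1_{𝕃_i}ᵀ G(B_{𝕃_i})⁻¹ 1_{𝕃_i}), B_{𝕃_i}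 is a matrix representation of B_{𝕃_i}, and 1_{𝕃_i} is the all-ones vector in ℝ^{dim 𝕃_i}. -/
open scoped RealInnerProductSpace

noncomputable section

section AuxGamma

open scoped Matrix

lemma gram_quad {n : ℕ} {ι : Type*} [Fintype ι] (D : ι → Euc n) (S : Finset ι)
    (x : {j : ι // j ∈ S} → ℝ) :
    x ⬝ᵥ (gramSub D S *ᵥ x) =
      ⟪∑ j : {j : ι // j ∈ S}, x j • D (j : ι), ∑ j : {j : ι // j ∈ S}, x j • D (j : ι)⟫ := by
  rw [sum_inner]
  simp only [dotProduct, Matrix.mulVec, dotProduct, gramSub, Matrix.of_apply,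
    inner_sum, real_inner_smul_left, real_inner_smul_right, Finset.mul_sum]
  refine Finset.sum_congr rfl fun j _ => Finset.sum_congr rfl fun j' _ => by ring

lemma gram_det_isUnit {n : ℕ} {ι : Type*} [Fintype ι] [DecidableEq ι] (D : ι → Euc n)
    (S : Finset ι)
    (hli : LinearIndependent ℝ fun j : {j : ι // j ∈ S} => D (j : ι)) :
    IsUnit (gramSub D S).det := by
  rw [isUnit_iff_ne_zero]
  intro hdet
  obtain ⟨v, hv0, hv⟩ := Matrix.exists_mulVec_eq_zero_iff.2 hdet
  have h1 : v ⬝ᵥ (gramSub D S *ᵥ v) = 0 := by rw [hv]; simp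
  rw [gram_quad] at h1
  have h2 : (∑ j : {j : ι // j ∈ S}, v j • D (j : ι)) = 0 :=
    inner_self_eq_zero.mp h1
  exact hv0 (funext fun j => Fintype.linearIndependent_iff.1 hli v h2 j)

lemma gram_inv_sum_nonneg {n : ℕ} {ι : Type*} [Fintype ι] [DecidableEq ι] (D : ι → Euc n)
    (S : Finset ι)
    (hli : LinearIndependent ℝ fun j : {j : ι // j ∈ S} => D (j : ι)) :
    0 ≤ ∑ j : {j : ι // j ∈ S}, ∑ j' : {j : ι // j ∈ S}, (gramSub D S)⁻¹ j j' := by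
  have hG := gram_det_isUnit D S hli
  set y : {j : ι // j ∈ S} → ℝ := (gramSub D S)⁻¹ *ᵥ (fun _ => 1) with hy
  have h1 : gramSub D S *ᵥ y = fun _ => 1 := by
    rw [hy, Matrix.mulVec_mulVec, Matrix.mul_nonsing_inv _ hG, Matrix.one_mulVec]
  have h2 : ∑ j : {j : ι // j ∈ S}, ∑ j' : {j : ι // j ∈ S}, (gramSub D S)⁻¹ j j'
      = y ⬝ᵥ (gramSub D S *ᵥ y) := by
    rw [h1]
    simp [dotProduct, hy, Matrix.mulVec]
  rw [h2, gram_quad]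
  exact real_inner_self_nonneg

end AuxGamma

/-- first part of Theorem 3.5: for an OSPB `D` decomposed into
minimal positive bases `D_{𝕃_i}` (fibers of `g`), and a linear basis `B ⊆ D` of `ℝ^n`
obtained as the union of linear bases `B_{𝕃_i} ⊆ D_{𝕃_i}` of the subspaces `𝕃_i`
(indexed by the finsets `T i`), one has
`γ_B = 1/√(Σ_i γ_{B_{𝕃_i}}⁻²) = 1/√(Σ_i 1ᵀ G(B_{𝕃_i})⁻¹ 1)`. -/
theorem gamma_of_ospb_basis_decomp {n s : ℕ}
    (D : Fin (n + s) → Euc n) (h0 : ∀ i, D i ≠ 0)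
    (L : Fin s → Submodule ℝ (Euc n)) (g : Fin (n + s) → Fin s)
    (hospb : IsOSPBDecomp D L g)
    (T : Fin s → Finset (Fin (n + s)))
    (hTfib : ∀ i : Fin s, ∀ j ∈ T i, g j = i)
    (hTbasis : ∀ i : Fin s, IsBasisSub D (T i) (L i)) :
    gammaSub D (Finset.univ.biUnion T)
      = 1 / Real.sqrt (∑ i : Fin s, ((gammaSub D (T i)) ^ 2)⁻¹) ∧
    gammaSub D (Finset.univ.biUnion T)
      = 1 / Real.sqrt (∑ i : Fin s,
          ∑ j : {j : Fin (n + s) // j ∈ T i}, ∑ j' : {j : Fin (n + s) // j ∈ T i},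
            (gramSub D (T i))⁻¹ j j') := by
  classical
  obtain ⟨horthL, -, -⟩ := hospb
  have hmemL : ∀ i : Fin s, ∀ j ∈ T i, D j ∈ L i := by
    intro i j hj
    rw [← (hTbasis i).2]
    exact Submodule.subset_span ⟨j, by simpa using hj, rfl⟩
  have hgT : ∀ {j : Fin (n + s)} {i : Fin s}, j ∈ T i → g j = i := fun h => hTfib _ _ h
  have hmemU : ∀ {j : Fin (n + s)}, j ∈ (Finset.univ.biUnion T) → j ∈ T (g j) := by
    intro j hj
    rcases Finset.mem_biUnion.1 hj with ⟨i, -, hi⟩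
    rwa [hgT hi]
  have horthD : ∀ {j j' : Fin (n + s)} {i i' : Fin s}, j ∈ T i → j' ∈ T i' → i ≠ i' →
      ⟪D j, D j'⟫ = 0 :=
    fun hj hj' hne => horthL _ _ hne _ (hmemL _ _ hj) _ (hmemL _ _ hj')
  have hdisj : ∀ i i' : Fin s, i ≠ i' → Disjoint (T i) (T i') := by
    intro i i' hne
    rw [Finset.disjoint_left]
    intro j hj hj'
    exact hne ((hgT hj).symm.trans (hgT hj'))
  set H' : Fin (n + s) → Fin (n + s) → ℝ := fun a b =>
    if h : a ∈ T (g a) ∧ b ∈ T (g a) then (gramSub D (T (g a)))⁻¹ ⟨a, h.1⟩ ⟨b, h.2⟩ else 0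
    with hH'
  have hH'eq : ∀ (i : Fin s) (a b : Fin (n + s)) (ha : a ∈ T i),
      H' a b = if h : b ∈ T i then (gramSub D (T i))⁻¹ ⟨a, ha⟩ ⟨b, h⟩ else 0 := by
    intro i a b ha
    have hga : g a = i := hgT ha
    subst hga
    simp only [hH']
    by_cases hb : b ∈ T (g a)
    · rw [dif_pos hb, dif_pos (show a ∈ T (g a) ∧ b ∈ T (g a) from ⟨ha, hb⟩)]
    · rw [dif_neg hb, dif_neg (show ¬(a ∈ T (g a) ∧ b ∈ T (g a)) from fun h => hb h.2)]
  set H : Matrix {j : Fin (n + s) // j ∈ (Finset.univ.biUnion T)} {j : Fin (n + s) // j ∈ (Finset.univ.biUnion T)} ℝ :=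
    fun j j' => H' (j : Fin (n + s)) (j' : Fin (n + s)) with hHdef
  have hpd : Set.PairwiseDisjoint (↑(Finset.univ : Finset (Fin s))) T :=
    fun i _ i' _ hne => hdisj i i' hne
  have hGH : gramSub D (Finset.univ.biUnion T) * H = 1 := by
    ext j j''
    rw [Matrix.mul_apply]
    have step1 : ∑ j' : {x : Fin (n + s) // x ∈ (Finset.univ.biUnion T)}, gramSub D (Finset.univ.biUnion T) j j' * H j' j''
        = ∑ a ∈ (Finset.univ.biUnion T), ⟪D (j : Fin (n + s)), D a⟫ * H' a (j'' : Fin (n + s)) :=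
      Finset.sum_coe_sort (Finset.univ.biUnion T) (fun a => ⟪D (j : Fin (n + s)), D a⟫ * H' a (j'' : Fin (n + s)))
    rw [step1, Finset.sum_biUnion hpd]
    have step2 : ∀ i : Fin s, i ≠ g (j : Fin (n + s)) →
        ∑ a ∈ T i, ⟪D (j : Fin (n + s)), D a⟫ * H' a (j'' : Fin (n + s)) = 0 := by
      intro i hne
      refine Finset.sum_eq_zero fun a ha => ?_
      rw [horthD (hmemU j.2) ha hne.symm, zero_mul]
    rw [Fintype.sum_eq_single (g (j : Fin (n + s))) step2]
    by_cases hc : (j'' : Fin (n + s)) ∈ T (g (j : Fin (n + s)))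
    · have hdet := gram_det_isUnit D (T (g (j : Fin (n + s)))) (hTbasis _).1
      have hmul := Matrix.mul_nonsing_inv _ hdet
      rw [← Finset.sum_coe_sort (T (g (j : Fin (n + s))))
        (fun a => ⟪D (j : Fin (n + s)), D a⟫ * H' a (j'' : Fin (n + s)))]
      have step3 : ∀ a : {x : Fin (n + s) // x ∈ T (g (j : Fin (n + s)))},
          ⟪D (j : Fin (n + s)), D (a : Fin (n + s))⟫ * H' (a : Fin (n + s)) (j'' : Fin (n + s))
            = gramSub D (T (g (j : Fin (n + s)))) ⟨(j : Fin (n + s)), hmemU j.2⟩ a *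
              (gramSub D (T (g (j : Fin (n + s)))))⁻¹ a ⟨(j'' : Fin (n + s)), hc⟩ := by
        intro a
        rw [hH'eq _ _ _ a.2, dif_pos hc]
        rfl
      rw [Finset.sum_congr rfl fun a _ => step3 a, ← Matrix.mul_apply, hmul]
      simp only [Matrix.one_apply, Subtype.mk.injEq, Subtype.ext_iff]
    · have step4 : ∑ a ∈ T (g (j : Fin (n + s))),
          ⟪D (j : Fin (n + s)), D a⟫ * H' a (j'' : Fin (n + s)) = 0 := by
        refine Finset.sum_eq_zero fun a ha => ?_
        rw [hH'eq _ _ _ ha, dif_neg hc, mul_zero]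
      rw [step4, Matrix.one_apply_ne]
      intro h
      exact hc (Subtype.ext_iff.1 h ▸ hmemU j.2)
  have hGinv : (gramSub D (Finset.univ.biUnion T))⁻¹ = H := Matrix.inv_eq_right_inv hGH
  have key : (∑ j : {x : Fin (n + s) // x ∈ (Finset.univ.biUnion T)}, ∑ j' : {x : Fin (n + s) // x ∈ (Finset.univ.biUnion T)},
        (gramSub D (Finset.univ.biUnion T))⁻¹ j j')
      = ∑ i : Fin s, ∑ a : {x : Fin (n + s) // x ∈ T i}, ∑ b : {x : Fin (n + s) // x ∈ T i},
          (gramSub D (T i))⁻¹ a b := by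
    rw [hGinv]
    have e1 : (∑ j : {x : Fin (n + s) // x ∈ (Finset.univ.biUnion T)}, ∑ j' : {x : Fin (n + s) // x ∈ (Finset.univ.biUnion T)}, H j j')
        = ∑ a ∈ (Finset.univ.biUnion T), ∑ b ∈ (Finset.univ.biUnion T), H' a b := by
      rw [← Finset.sum_coe_sort (Finset.univ.biUnion T) (fun a => ∑ b ∈ (Finset.univ.biUnion T), H' a b)]
      refine Finset.sum_congr rfl fun j _ => ?_
      exact Finset.sum_coe_sort (Finset.univ.biUnion T) (fun b => H' (j : Fin (n + s)) b)
    rw [e1, Finset.sum_biUnion hpd]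
    refine Finset.sum_congr rfl fun i _ => ?_
    have e2 : ∑ a ∈ T i, ∑ b ∈ (Finset.univ.biUnion T), H' a b = ∑ a ∈ T i, ∑ b ∈ T i, H' a b := by
      refine Finset.sum_congr rfl fun a ha => ?_
      rw [Finset.sum_biUnion hpd]
      refine Fintype.sum_eq_single i ?_
      intro i' hne
      refine Finset.sum_eq_zero fun b hb => ?_
      rw [hH'eq i a b ha]
      exact dif_neg (Finset.disjoint_left.1 (hdisj i' i hne) hb)
    rw [e2, ← Finset.sum_coe_sort (T i) (fun a => ∑ b ∈ T i, H' a b)]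
    refine Finset.sum_congr rfl fun a _ => ?_
    rw [← Finset.sum_coe_sort (T i) (fun b => H' (a : Fin (n + s)) b)]
    refine Finset.sum_congr rfl fun b _ => ?_
    rw [hH'eq i _ _ a.2, dif_pos b.2]
  have hblock : ∀ i : Fin s, ((gammaSub D (T i)) ^ 2)⁻¹
      = ∑ a : {x : Fin (n + s) // x ∈ T i}, ∑ b : {x : Fin (n + s) // x ∈ T i},
          (gramSub D (T i))⁻¹ a b := by
    intro i
    have hx := gram_inv_sum_nonneg D (T i) (hTbasis i).1
    rw [gammaSub, div_pow, one_pow, Real.sq_sqrt hx, one_div, inv_inv]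
  have hsum : ∑ i : Fin s, ((gammaSub D (T i)) ^ 2)⁻¹
      = ∑ i : Fin s, ∑ a : {x : Fin (n + s) // x ∈ T i}, ∑ b : {x : Fin (n + s) // x ∈ T i},
          (gramSub D (T i))⁻¹ a b :=
    Finset.sum_congr rfl fun i _ => hblock i
  constructor
  · rw [gammaSub, key, ← hsum]
  · rw [gammaSub, key]
end
end

section
/- Let n ≥ 2 and let D = {e_1, …, e_n, -1_n}, where e_1,…,e_n are the standard coordinate vectors of ℝ^n and 1_n is the all-ones vector. Then the cosine measure of D is cm(D) = 1/√(n² + 2(n-1)√n). -/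
open scoped RealInnerProductSpace

noncomputable section

lemma key_ineq (n : ℕ) (hn : 2 ≤ n) (u : Fin n → ℝ) (m : ℝ)
    (h1 : ∀ i, u i ≤ m) (h2 : -(∑ i, u i) / Real.sqrt n ≤ m) :
    ∑ i, (u i)^2 ≤ m^2 * ((n:ℝ)^2 + 2*((n:ℝ)-1)*Real.sqrt n) := by
  have hn2 : (2:ℝ) ≤ n := by exact_mod_cast hn
  have hsn : (1:ℝ) ≤ Real.sqrt n := by
    rw [show (1:ℝ) = Real.sqrt 1 by simp]
    exact Real.sqrt_le_sqrt (by linarith)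
  have hsq : Real.sqrt n * Real.sqrt n = n := Real.mul_self_sqrt (by positivity)
  have hsum_ge : -(m * Real.sqrt n) ≤ ∑ i, u i := by
    have := (div_le_iff₀ (by linarith : (0:ℝ) < Real.sqrt n)).mp h2
    linarith
  have hsum_le : ∑ i, u i ≤ n * m := by
    calc ∑ i, u i ≤ ∑ _i : Fin n, m := Finset.sum_le_sum fun i _ => h1 i
    _ = n * m := by simp [mul_comm]
  have hm0 : 0 ≤ m := by nlinarith
  set s := ∑ i, (m - u i) with hs_def
  have hterm : ∀ i ∈ Finset.univ, (0:ℝ) ≤ m - u i := fun i _ => by linarith [h1 i]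
  have hs0 : 0 ≤ s := Finset.sum_nonneg hterm
  have hsS : s ≤ m * ((n:ℝ) + Real.sqrt n) := by
    have : s = n * m - ∑ i, u i := by
      simp [hs_def, Finset.sum_sub_distrib, mul_comm]
    nlinarith
  have hv : ∑ i, (m - u i)^2 ≤ s^2 := by
    have h1' : ∀ i ∈ Finset.univ, (m - u i)^2 ≤ (m - u i) * s := fun i _ => by
      have := Finset.single_le_sum hterm (Finset.mem_univ i)
      nlinarith [hterm i (Finset.mem_univ i)]
    calc ∑ i, (m - u i)^2 ≤ ∑ i, (m - u i) * s := Finset.sum_le_sum h1'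
    _ = s * s := by rw [← Finset.sum_mul]
    _ = s^2 := by ring
  have hexp : ∑ i, (u i)^2 = n * m^2 - 2*m*s + ∑ i, (m - u i)^2 := by
    have h : ∀ i ∈ Finset.univ, (u i)^2 = m^2 - 2*m*(m - u i) + (m - u i)^2 := fun i _ => by ring
    rw [Finset.sum_congr rfl h, Finset.sum_add_distrib, Finset.sum_sub_distrib, ← Finset.mul_sum,
      Finset.sum_const, Finset.card_univ, Fintype.card_fin, hs_def]
    ring
  nlinarith [mul_nonneg (sub_nonneg.mpr hsS) (by nlinarith : (0:ℝ) ≤ s + m * ((n:ℝ) + Real.sqrt n) - 2*m)]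


/-- Lemma 3.6: the cosine measure of the minimal positive basis
`{e_1, …, e_n, -1_n}` of `ℝ^n` (`n ≥ 2`) equals `1/√(n² + 2(n-1)√n)`. -/
theorem cosm_canonical_minimal_basis {n : ℕ} (hn : 2 ≤ n)
    (D : Fin (n + 1) → Euc n)
    (hcoord : ∀ i : Fin n, D i.castSucc = EuclideanSpace.single i (1 : ℝ))
    (hlast : D (Fin.last n) = -∑ i : Fin n, EuclideanSpace.single i (1 : ℝ)) :
    cosm D = 1 / Real.sqrt ((n : ℝ) ^ 2 + 2 * ((n : ℝ) - 1) * Real.sqrt (n : ℝ)) := by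
  have hn2 : (2:ℝ) ≤ n := by exact_mod_cast hn
  have hsn1 : (1:ℝ) ≤ Real.sqrt n := by
    rw [show (1:ℝ) = Real.sqrt 1 by simp]
    exact Real.sqrt_le_sqrt (by linarith)
  have hsq : Real.sqrt n * Real.sqrt n = n := Real.mul_self_sqrt (by positivity)
  set K : ℝ := (n:ℝ)^2 + 2*((n:ℝ)-1)*Real.sqrt n with hK_def
  have hK : 0 < K := by nlinarith
  have hsK : 0 < Real.sqrt K := Real.sqrt_pos.mpr hK
  set lam : ℝ := 1 / Real.sqrt K with hlam_def
  have hlam : 0 < lam := by positivity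
  have hlam2 : lam^2 * K = 1 := by
    rw [hlam_def, div_pow, one_pow, Real.sq_sqrt hK.le]
    field_simp
  -- basic computations on D
  have hinner_coord : ∀ (u : Euc n) (i : Fin n), ⟪u, D i.castSucc⟫ = u i := by
    intro u i
    rw [hcoord]
    simp [EuclideanSpace.inner_single_right]
  have hnorm_coord : ∀ i : Fin n, ‖D i.castSucc‖ = 1 := by
    intro i; rw [hcoord]; simp [EuclideanSpace.norm_single]
  have hinner_last : ∀ u : Euc n, ⟪u, D (Fin.last n)⟫ = -∑ i, u i := by
    intro u
    rw [hlast, inner_neg_right, inner_sum]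
    simp [EuclideanSpace.inner_single_right]
  have hnorm_last : ‖D (Fin.last n)‖ = Real.sqrt n := by
    have h2 : ⟪D (Fin.last n), D (Fin.last n)⟫ = (n:ℝ) := by
      rw [hlast, inner_neg_neg, sum_inner]
      simp [inner_sum, EuclideanSpace.inner_single_right, EuclideanSpace.single_apply]
    have h3 : ‖D (Fin.last n)‖^2 = (n:ℝ) := by
      rw [← real_inner_self_eq_norm_sq]; exact h2
    rw [← Real.sqrt_sq (norm_nonneg _), h3]
  -- value of the objective
  have hval : ∀ u : Euc n, ∀ i : Fin (n+1),
      ⟪u, D i⟫ / ‖D i‖ = Fin.lastCases (motive := fun _ => ℝ)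
        (-(∑ j, u j) / Real.sqrt n) (fun j : Fin n => u j) i := by
    intro u i
    induction i using Fin.lastCases with
    | last => rw [Fin.lastCases_last, hinner_last, hnorm_last]
    | cast j => rw [Fin.lastCases_castSucc, hinner_coord, hnorm_coord, div_one]
  -- lower bound for every unit vector
  have hlow : ∀ u : Euc n, ‖u‖ = 1 → lam ≤ ⨆ i : Fin (n+1), ⟪u, D i⟫ / ‖D i‖ := by
    intro u hu
    set m := ⨆ i : Fin (n+1), ⟪u, D i⟫ / ‖D i‖ with hm_def
    have hle : ∀ i : Fin (n+1), ⟪u, D i⟫ / ‖D i‖ ≤ m :=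
      fun i => le_ciSup (f := fun i : Fin (n+1) => ⟪u, D i⟫ / ‖D i‖) (Finite.bddAbove_range _) i
    have h1 : ∀ i : Fin n, u i ≤ m := by
      intro i
      have := hle i.castSucc
      rwa [hval u i.castSucc, Fin.lastCases_castSucc] at this
    have h2 : -(∑ i, u i) / Real.sqrt n ≤ m := by
      have := hle (Fin.last n)
      rwa [hval u (Fin.last n), Fin.lastCases_last] at this
    have hkey := key_ineq n hn u m h1 h2
    have hnorm : ∑ i, (u i)^2 = 1 := by
      have := congrArg (·^2) hu
      simp only [EuclideanSpace.norm_eq] at this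
      rw [Real.sq_sqrt (by positivity)] at this
      simpa [sq_abs, Real.norm_eq_abs] using this
    -- 1 ≤ m^2 * K and m ≥ 0 ⟹ lam ≤ m
    have hsum_ge : -(m * Real.sqrt n) ≤ ∑ i, u i := by
      have := (div_le_iff₀ (by linarith : (0:ℝ) < Real.sqrt n)).mp h2
      linarith
    have hsum_le : ∑ i, u i ≤ n * m := by
      calc ∑ i, u i ≤ ∑ _i : Fin n, m := Finset.sum_le_sum fun i _ => h1 i
      _ = n * m := by simp [mul_comm]
    have hm0 : 0 ≤ m := by nlinarith
    have h1K : 1 ≤ m^2 * K := by rw [← hnorm]; exact hkey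
    rw [hlam_def, div_le_iff₀ hsK]
    nlinarith [Real.sq_sqrt hK.le, mul_nonneg hm0 hsK.le]
  -- the optimal unit vector
  have hz : 0 < n := by omega
  set z : Fin n := ⟨0, hz⟩ with hz_def
  set a : ℝ := -lam * (Real.sqrt n + n - 1) with ha_def
  set u₀ : Euc n := WithLp.toLp 2 (fun j => if j = z then a else lam : Fin n → ℝ) with hu0_def
  have hu0_apply : ∀ j, u₀ j = if j = z then a else lam := fun j => rfl
  have hsplit : ∀ (b c : ℝ), ∑ j : Fin n, (if j = z then b else c) = n * c + (b - c) := by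
    intro b c
    have h : ∀ j ∈ Finset.univ, (if j = z then b else c) = c + (if j = z then b - c else 0) :=
      fun j _ => by split_ifs <;> ring
    rw [Finset.sum_congr rfl h, Finset.sum_add_distrib, Finset.sum_const, Finset.card_univ,
      Fintype.card_fin, Finset.sum_ite_eq' Finset.univ z (fun _ => b - c)]
    simp [nsmul_eq_mul]
  have hsum0 : ∑ j, u₀ j = -(lam * Real.sqrt n) := by
    simp only [hu0_apply, hsplit]
    rw [ha_def]; ring
  have hsumsq0 : ∑ j, (u₀ j)^2 = lam^2 * K := by
    have h : ∀ j ∈ Finset.univ, (u₀ j)^2 = if j = z then a^2 else lam^2 := fun j _ => by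
      rw [hu0_apply]; split_ifs <;> ring
    rw [Finset.sum_congr rfl h, hsplit, ha_def, hK_def]
    linear_combination (lam^2) * hsq
  have hnorm0 : ‖u₀‖ = 1 := by
    rw [EuclideanSpace.norm_eq]
    have : ∑ i, ‖u₀ i‖^2 = lam^2 * K := by
      simp only [Real.norm_eq_abs, sq_abs]; exact hsumsq0
    rw [this, hlam2, Real.sqrt_one]
  have hsup0 : (⨆ i : Fin (n+1), ⟪u₀, D i⟫ / ‖D i‖) ≤ lam := by
    apply ciSup_le
    intro i
    rw [hval u₀ i]
    induction i using Fin.lastCases with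
    | last =>
      rw [Fin.lastCases_last, hsum0, neg_neg, mul_div_assoc,
        div_self (by positivity : Real.sqrt n ≠ 0), mul_one]
    | cast j =>
      rw [Fin.lastCases_castSucc, hu0_apply]
      split_ifs
      · rw [ha_def]; nlinarith
      · exact le_rfl
  have : Nonempty {u : Euc n // ‖u‖ = 1} := ⟨⟨u₀, hnorm0⟩⟩
  have hbdd : BddBelow (Set.range fun u : {u : Euc n // ‖u‖ = 1} =>
      ⨆ i : Fin (n+1), ⟪(u : Euc n), D i⟫ / ‖D i‖) := by
    refine ⟨lam, ?_⟩
    rintro x ⟨u, rfl⟩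
    exact hlow u.1 u.2
  apply le_antisymm
  · exact le_trans (ciInf_le hbdd ⟨u₀, hnorm0⟩) hsup0
  · exact le_ciInf fun u => hlow u.1 u.2
end
end

section
/- Let 𝕃 be a linear subspace of ℝ^n, D a finite family of nonzero vectors in 𝕃, and k an integer with 1 ≤ k ≤ |D|. The following statements are equivalent: (i) D is a positive k-spanning set of 𝕃; (ii) for every nonzero vector u ∈ 𝕃 there exist k elements d_1,…,d_k of D (counted with multiplicity) such that uᵀd_i > 0 for all i = 1,…,k; (iii) span_k(D) = 𝕃 and, for every subfamily S ⊆ D of cardinality |D| - k + 1, the zero vector can be written as a linear combination of the elements of S with all coefficients strictly positive. -/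
open scoped RealInnerProductSpace

noncomputable section

namespace PkssAux

variable {n : ℕ} {ι : Type*} [Fintype ι]

lemma sum_subtype_mem (S : Finset ι) (f : ι → Euc n) :
    ∑ j : {j : ι // j ∈ S}, f (j : ι) = ∑ i ∈ S, f i := by
  rw [Finset.univ_eq_attach, Finset.sum_attach]

lemma mem_pspan_iff {S : Finset ι} {D : ι → Euc n} {x : Euc n} :
    x ∈ pspan (fun j : {j : ι // j ∈ S} => D (j : ι)) ↔
      ∃ c : ι → ℝ, (∀ i, 0 ≤ c i) ∧ x = ∑ i ∈ S, c i • D i := by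
  constructor
  · rintro ⟨c, hc, rfl⟩
    classical
    refine ⟨fun i => if h : i ∈ S then c ⟨i, h⟩ else 0, fun i => ?_, ?_⟩
    · by_cases h : i ∈ S <;> simp [h, hc]
    · rw [← sum_subtype_mem S (fun i => (if h : i ∈ S then c ⟨i, h⟩ else 0) • D i)]
      exact Finset.sum_congr rfl fun j _ => by rw [dif_pos j.2]
  · rintro ⟨c, hc, rfl⟩
    exact ⟨fun j => c j, fun j => hc _, (sum_subtype_mem S fun i => c i • D i).symm⟩

lemma convex_pspan (D : ι → Euc n) : Convex ℝ (pspan D) := by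
  rintro x ⟨cx, hcx, rfl⟩ y ⟨cy, hcy, rfl⟩ a b ha hb _
  refine ⟨fun i => a * cx i + b * cy i,
    fun i => add_nonneg (mul_nonneg ha (hcx i)) (mul_nonneg hb (hcy i)), ?_⟩
  rw [Finset.smul_sum, Finset.smul_sum, ← Finset.sum_add_distrib]
  exact Finset.sum_congr rfl fun i _ => by
    rw [add_smul, mul_smul, mul_smul, smul_smul, smul_smul] <;> ring_nf

lemma smul_mem_pspan {D : ι → Euc n} {x : Euc n} (hx : x ∈ pspan D) {t : ℝ} (ht : 0 ≤ t) :
    t • x ∈ pspan D := by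
  obtain ⟨c, hc, rfl⟩ := hx
  refine ⟨fun i => t * c i, fun i => mul_nonneg ht (hc i), ?_⟩
  rw [Finset.smul_sum]
  exact Finset.sum_congr rfl fun i _ => (mul_smul _ _ _).symm

lemma zero_mem_pspan (D : ι → Euc n) : (0 : Euc n) ∈ pspan D :=
  ⟨0, fun _ => le_rfl, by simp⟩

lemma single_mem_pspan (D : ι → Euc n) (i : ι) : D i ∈ pspan D := by
  classical
  refine ⟨fun j => if j = i then 1 else 0, fun j => by positivity, ?_⟩
  simp [ite_smul]

lemma sum_subtype_ne [DecidableEq ι] (i : ι) (f : ι → Euc n) :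
    ∑ j : {j : ι // j ≠ i}, f (j : ι) = ∑ j ∈ Finset.univ.erase i, f j :=
  (Finset.sum_subtype _ (by simp) f).symm

lemma pspan_eq_union_ne [DecidableEq ι] (F : ι → Euc n) (a : ι → ℝ)
    (ha : ∑ i, a i • F i = 0) (i0 : ι) (ha0 : a i0 ≠ 0) :
    pspan F = ⋃ i : ι, pspan (fun j : {j : ι // j ≠ i} => F (j : ι)) := by
  apply Set.Subset.antisymm
  · rintro x ⟨c, hc, rfl⟩
    set s : ι → ℝ := if 0 < a i0 then a else -a with hs_def
    have hs_sum : ∑ i, s i • F i = 0 := by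
      by_cases h : 0 < a i0 <;>
        simp [hs_def, h, neg_smul, Finset.sum_neg_distrib, ha]
    have hs_pos : 0 < s i0 := by
      by_cases h : 0 < a i0
      · simpa [hs_def, h] using h
      · have : a i0 < 0 := lt_of_le_of_ne (not_lt.mp h) ha0
        simp [hs_def, h]
        linarith
    classical
    set P : Finset ι := Finset.univ.filter (fun i => 0 < s i) with hP
    have hi0P : i0 ∈ P := by simp [hP, hs_pos]
    obtain ⟨b, hbP, hbmin⟩ := Finset.exists_min_image P (fun i => c i / s i) ⟨i0, hi0P⟩
    have hsb : 0 < s b := by simpa [hP] using hbP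
    set t : ℝ := c b / s b with ht_def
    have ht0 : 0 ≤ t := div_nonneg (hc b) hsb.le
    set c' : ι → ℝ := fun j => c j - t * s j with hc'_def
    have hc' : ∀ j, 0 ≤ c' j := by
      intro j
      by_cases hj : 0 < s j
      · have := hbmin j (by simp [hP, hj])
        have : t * s j ≤ c j := by
          rw [ht_def]
          calc (c b / s b) * s j ≤ (c j / s j) * s j := by
                exact mul_le_mul_of_nonneg_right this hj.le
            _ = c j := div_mul_cancel₀ _ hj.ne'
        simpa [hc'_def] using this
      · have h1 : t * s j ≤ 0 := mul_nonpos_of_nonneg_of_nonpos ht0 (not_lt.mp hj)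
        have := hc j
        simp only [hc'_def]
        linarith
    have hc'b : c' b = 0 := by
      simp [hc'_def, ht_def, div_mul_cancel₀ _ hsb.ne']
    have hsum : ∑ j, c' j • F j = ∑ j, c j • F j := by
      simp only [hc'_def, sub_smul, mul_smul, Finset.sum_sub_distrib]
      rw [← Finset.smul_sum, hs_sum, smul_zero, sub_zero]
    refine Set.mem_iUnion.mpr ⟨b, ⟨fun j => c' (j : ι), fun j => hc' _, ?_⟩⟩
    rw [sum_subtype_ne b (fun j => c' j • F j), Finset.sum_erase _ (by simp [hc'b]), hsum]
  · refine Set.iUnion_subset fun i => ?_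
    rintro x ⟨c, hc, rfl⟩
    classical
    refine ⟨fun j => if h : j ≠ i then c ⟨j, h⟩ else 0, fun j => ?_, ?_⟩
    · by_cases h : j ≠ i <;> simp [h, hc]
    · have h0 : (fun j => (if h : j ≠ i then c ⟨j, h⟩ else 0) • F j) i = 0 := by simp
      rw [show ∑ j : ι, (if h : j ≠ i then c ⟨j, h⟩ else 0) • F j
          = ∑ j ∈ Finset.univ.erase i, (if h : j ≠ i then c ⟨j, h⟩ else 0) • F j from
          (Finset.sum_erase (f := fun j => (if h : j ≠ i then c ⟨j, h⟩ else 0) • F j) _ h0).symm,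
          ← sum_subtype_ne i]
      exact Finset.sum_congr rfl fun j _ => by rw [dif_pos j.2]

end PkssAux


namespace PkssAux

variable {n : ℕ} {ι : Type*} [Fintype ι]

lemma mem_span_iff {S : Finset ι} {D : ι → Euc n} {x : Euc n} :
    x ∈ Submodule.span ℝ (D '' (S : Set ι)) ↔ ∃ a : ι → ℝ, x = ∑ i ∈ S, a i • D i := by
  classical
  have hrange : Set.range (fun j : {j : ι // j ∈ S} => D (j : ι)) = D '' (S : Set ι) := by
    rw [show (fun j : {j : ι // j ∈ S} => D (j : ι)) = D ∘ Subtype.val from rfl,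
      Set.range_comp, Subtype.range_val]
  rw [← hrange, Submodule.mem_span_range_iff_exists_fun]
  constructor
  · rintro ⟨c, hcs⟩
    refine ⟨fun i => if h : i ∈ S then c ⟨i, h⟩ else 0, ?_⟩
    rw [← hcs, ← sum_subtype_mem S (fun i => (if h : i ∈ S then c ⟨i, h⟩ else 0) • D i)]
    exact (Finset.sum_congr rfl fun j _ => by rw [dif_pos j.2]).symm
  · rintro ⟨a, rfl⟩
    exact ⟨fun j => a j, sum_subtype_mem S fun i => a i • D i⟩

lemma isClosed_pspan_of_linearIndependent {ι' : Type*} [Fintype ι'] {F : ι' → Euc n}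
    (h : LinearIndependent ℝ F) : IsClosed (pspan F) := by
  classical
  set φ : (ι' → ℝ) →ₗ[ℝ] Euc n := Fintype.linearCombination ℝ F with hφ
  have hker : LinearMap.ker φ = ⊥ := by
    rw [LinearMap.ker_eq_bot']
    intro c hc
    have := Fintype.linearIndependent_iff.mp h c (by
      simpa [hφ, Fintype.linearCombination_apply] using hc)
    funext i; exact this i
  have hemb := LinearMap.isClosedEmbedding_of_injective (𝕜 := ℝ) hker
  have horth : IsClosed {c : ι' → ℝ | ∀ i, 0 ≤ c i} := by
    have : {c : ι' → ℝ | ∀ i, 0 ≤ c i} = ⋂ i, (fun c : ι' → ℝ => c i) ⁻¹' Set.Ici 0 := by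
      ext c; simp [Set.mem_iInter]
    rw [this]
    exact isClosed_iInter fun i => IsClosed.preimage (continuous_apply i) isClosed_Ici
  have himg : pspan F = φ '' {c : ι' → ℝ | ∀ i, 0 ≤ c i} := by
    ext x
    constructor
    · rintro ⟨c, hc, rfl⟩
      exact ⟨c, hc, by simp [hφ, Fintype.linearCombination_apply]⟩
    · rintro ⟨c, hc, rfl⟩
      exact ⟨c, hc, by simp [hφ, Fintype.linearCombination_apply]⟩
  rw [himg]
  exact hemb.isClosedMap _ horth

lemma isClosed_pspan : ∀ (N : ℕ) {ι' : Type*} [Fintype ι'] (F : ι' → Euc n),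
    Fintype.card ι' ≤ N → IsClosed (pspan F) := by
  intro N
  induction N with
  | zero =>
    intro ι' _ F hcard
    have : IsEmpty ι' := Fintype.card_eq_zero_iff.mp (Nat.le_zero.mp hcard)
    have : pspan F = {(0 : Euc n)} := by
      apply Set.Subset.antisymm
      · rintro x ⟨c, _, rfl⟩; simp
      · rintro x hx; rw [Set.mem_singleton_iff.mp hx]; exact zero_mem_pspan F
    rw [this]; exact isClosed_singleton
  | succ N ih =>
    intro ι' _ F hcard
    classical
    by_cases hli : LinearIndependent ℝ F
    · exact isClosed_pspan_of_linearIndependent hli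
    · obtain ⟨a, ha, i0, ha0⟩ := Fintype.not_linearIndependent_iff.mp hli
      rw [pspan_eq_union_ne F a ha i0 ha0]
      refine isClosed_iUnion_of_finite fun i => ?_
      refine ih _ ?_
      have : Fintype.card {j : ι' // j ≠ i} = Fintype.card ι' - 1 := by
        simp [Fintype.card_subtype_compl (p := fun j => j = i)]
      have hpos : 1 ≤ Fintype.card ι' := Fintype.card_pos_iff.mpr ⟨i⟩
      omega

end PkssAux

/-- Lemma 4.3: characterizations of positive `k`-spanning sets:
(i) `D` is a PkSS of `L`; (ii) every nonzero `u ∈ L` makes a positive dot product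
with at least `k` elements of `D` (counted with multiplicity); (iii) the `k`-span of
`D` is `L` and, for every subfamily `S` of cardinality `|D| - k + 1`, zero is a
strictly positive combination of the elements of `S`. -/

theorem pkss_characterizations {n : ℕ} {ι : Type*} [Fintype ι]
    (L : Submodule ℝ (Euc n)) (D : ι → Euc n)
    (hmem : ∀ i, D i ∈ L) (h0 : ∀ i, D i ≠ 0)
    (k : ℕ) (hk1 : 1 ≤ k) (hk2 : k ≤ Fintype.card ι) :
    (IsPkSS k D L ↔
      ∀ u ∈ L, u ≠ 0 → ∃ T : Finset ι, T.card = k ∧ ∀ i ∈ T, 0 < ⟪u, D i⟫) ∧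
    (IsPkSS k D L ↔
      spanK k D = (L : Set (Euc n)) ∧
      ∀ S : Finset ι, S.card = Fintype.card ι - k + 1 →
        ∃ c : ι → ℝ, (∀ i ∈ S, 0 < c i) ∧ ∑ i ∈ S, c i • D i = 0) := by
  classical
  have hm_le : Fintype.card ι - k + 1 ≤ Fintype.card ι := by omega
  have hL_sub : ∀ S : Finset ι,
      pspan (fun j : {j : ι // j ∈ S} => D (j : ι)) ⊆ (L : Set (Euc n)) := by
    intro S x hx
    obtain ⟨c, hc, rfl⟩ := PkssAux.mem_pspan_iff.mp hx
    exact Submodule.sum_mem _ fun i _ => Submodule.smul_mem _ _ (hmem i)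
  have hiff : IsPkSS k D L ↔ ∀ S : Finset ι, Fintype.card ι - k + 1 ≤ S.card →
      (L : Set (Euc n)) ⊆ pspan (fun j : {j : ι // j ∈ S} => D (j : ι)) := by
    constructor
    · intro h S hS x hx
      rw [IsPkSS] at h
      rw [← h] at hx
      exact Set.mem_iInter.mp (Set.mem_iInter.mp hx S) hS
    · intro h
      apply Set.Subset.antisymm
      · intro x hx
        have h1 := Set.mem_iInter.mp (Set.mem_iInter.mp hx Finset.univ) (by simpa using hm_le)
        exact hL_sub _ h1
      · intro x hx
        exact Set.mem_iInter.mpr fun S => Set.mem_iInter.mpr fun hS => h S hS hx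
  have hcount : ∀ T S : Finset ι, T.card = k → Fintype.card ι - k + 1 ≤ S.card →
      (∀ i ∈ T, i ∉ S) → False := by
    intro T S hT hS hdis
    have h1 := Finset.card_le_card (fun i hi => Finset.mem_compl.mpr (hdis i hi) : T ⊆ Sᶜ)
    rw [Finset.card_compl] at h1
    have h2 := S.card_le_univ
    omega
  -- (i) → (ii)
  have hAB : IsPkSS k D L →
      ∀ u ∈ L, u ≠ 0 → ∃ T : Finset ι, T.card = k ∧ ∀ i ∈ T, 0 < ⟪u, D i⟫ := by
    intro hA u huL hu0
    set T0 : Finset ι := Finset.univ.filter (fun i => 0 < ⟪u, D i⟫) with hT0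
    by_cases hk : k ≤ T0.card
    · obtain ⟨T, hTsub, hTcard⟩ := Finset.exists_subset_card_eq hk
      refine ⟨T, hTcard, fun i hi => ?_⟩
      have := hTsub hi
      rw [hT0, Finset.mem_filter] at this
      exact this.2
    · exfalso
      push_neg at hk
      have hSc : Fintype.card ι - k + 1 ≤ T0ᶜ.card := by rw [Finset.card_compl]; omega
      obtain ⟨c, hc, hsum⟩ := PkssAux.mem_pspan_iff.mp ((hiff.mp hA) T0ᶜ hSc huL)
      have hpos : (0:ℝ) < ⟪u, u⟫ := by
        have hn : 0 < ‖u‖ := norm_pos_iff.mpr hu0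
        rw [real_inner_self_eq_norm_sq]
        positivity
      have hle : ⟪u, u⟫ ≤ (0:ℝ) := by
        have h1 : ⟪u, u⟫ = ∑ i ∈ T0ᶜ, c i * ⟪u, D i⟫ := by
          have h2 := congrArg (fun z : Euc n => (inner ℝ u z : ℝ)) hsum
          rw [h2, inner_sum]
          exact Finset.sum_congr rfl fun i _ => real_inner_smul_right _ _ _
        rw [h1]
        refine Finset.sum_nonpos fun i hi => mul_nonpos_of_nonneg_of_nonpos (hc i) ?_
        have : ¬ (0 < ⟪u, D i⟫) := by
          have := Finset.mem_compl.mp hi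
          rw [hT0] at this; simpa using this
        linarith
      linarith
  -- (ii) → (i)
  have hBA : (∀ u ∈ L, u ≠ 0 → ∃ T : Finset ι, T.card = k ∧ ∀ i ∈ T, 0 < ⟪u, D i⟫) →
      IsPkSS k D L := by
    intro hB
    rw [hiff]
    intro S hS x hx
    by_contra hxC
    have hclosed : IsClosed (pspan (fun j : {j : ι // j ∈ S} => D (j : ι))) :=
      PkssAux.isClosed_pspan _ _ (le_refl _)
    have hconv := PkssAux.convex_pspan (fun j : {j : ι // j ∈ S} => D (j : ι))
    obtain ⟨f, u, hfu, hux⟩ := geometric_hahn_banach_closed_point hconv hclosed hxC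
    have hu_pos : 0 < u := by simpa using hfu 0 (PkssAux.zero_mem_pspan _)
    have hfz : ∀ z ∈ pspan (fun j : {j : ι // j ∈ S} => D (j : ι)), f z ≤ 0 := by
      intro z hz
      by_contra hgt
      push_neg at hgt
      have := hfu ((u / f z) • z) (PkssAux.smul_mem_pspan hz (div_nonneg hu_pos.le hgt.le))
      rw [map_smul, smul_eq_mul, div_mul_cancel₀ _ hgt.ne'] at this
      exact lt_irrefl _ this
    set y := (InnerProductSpace.toDual ℝ (Euc n)).symm f with hy
    have hyz : ∀ z : Euc n, ⟪y, z⟫ = f z := fun z => InnerProductSpace.toDual_symm_apply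
    haveI : CompleteSpace L := FiniteDimensional.complete ℝ L
    set u0 : Euc n := (L.orthogonalProjectionOnto y : Euc n) with hu0
    have hu0L : u0 ∈ L := SetLike.coe_mem _
    have hinner : ∀ z ∈ L, ⟪u0, z⟫ = ⟪y, z⟫ := by
      intro z hz
      have horth := Submodule.sub_starProjection_mem_orthogonal (K := L) y
      have h1 : ⟪z, y - u0⟫ = 0 := (Submodule.mem_orthogonal L _).mp horth z hz
      have h2 : ⟪y - u0, z⟫ = 0 := by rw [real_inner_comm]; exact h1
      rw [inner_sub_left] at h2
      linarith
    have hu0x : 0 < ⟪u0, x⟫ := by rw [hinner x hx, hyz]; linarith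
    have hu00 : u0 ≠ 0 := by
      intro h; rw [h] at hu0x; simp at hu0x
    obtain ⟨T, hTcard, hTpos⟩ := hB u0 hu0L hu00
    refine hcount T S hTcard hS fun i hiT hiS => ?_
    have hDiC : D i ∈ pspan (fun j : {j : ι // j ∈ S} => D (j : ι)) :=
      PkssAux.mem_pspan_iff.mpr ⟨fun j => if j = i then 1 else 0,
        fun j => by
          show (0:ℝ) ≤ if j = i then 1 else 0
          split <;> norm_num, by
          show D i = ∑ j ∈ S, (if j = i then (1:ℝ) else 0) • D j
          simp [ite_smul, hiS]⟩
    have h1 : f (D i) ≤ 0 := hfz _ hDiC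
    have h2 := hTpos i hiT
    rw [hinner (D i) (hmem i), hyz] at h2
    linarith
  -- (i) → (iii)
  have hAC : IsPkSS k D L → spanK k D = (L : Set (Euc n)) ∧
      ∀ S : Finset ι, S.card = Fintype.card ι - k + 1 →
        ∃ c : ι → ℝ, (∀ i ∈ S, 0 < c i) ∧ ∑ i ∈ S, c i • D i = 0 := by
    intro hA
    have hA' := hiff.mp hA
    constructor
    · apply Set.Subset.antisymm
      · intro x hx
        have h2 := Set.mem_iInter.mp (Set.mem_iInter.mp hx Finset.univ) (by simpa using hm_le)
        have h3 : Submodule.span ℝ (D '' ((Finset.univ : Finset ι) : Set ι)) ≤ L :=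
          Submodule.span_le.mpr (by rintro _ ⟨i, _, rfl⟩; exact hmem i)
        exact h3 h2
      · intro x hx
        refine Set.mem_iInter.mpr fun S => Set.mem_iInter.mpr fun hS => ?_
        obtain ⟨c, hc, hsum⟩ := PkssAux.mem_pspan_iff.mp (hA' S hS hx)
        exact PkssAux.mem_span_iff.mpr ⟨c, hsum⟩
    · intro S hScard
      have hS : Fintype.card ι - k + 1 ≤ S.card := le_of_eq hScard.symm
      have hneg : ∀ i : ι, ∃ w : ι → ℝ,
          (∀ j, 0 ≤ w j) ∧ (i ∈ S → -D i = ∑ j ∈ S, w j • D j) := by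
        intro i
        by_cases h : i ∈ S
        · obtain ⟨w, hw, hsum⟩ := PkssAux.mem_pspan_iff.mp (hA' S hS (L.neg_mem (hmem i)))
          exact ⟨w, hw, fun _ => hsum⟩
        · exact ⟨0, fun _ => le_rfl, fun h' => absurd h' h⟩
      choose w hw1 hw2 using hneg
      refine ⟨fun j => 1 + ∑ i ∈ S, w i j, fun j _ =>
        add_pos_of_pos_of_nonneg one_pos (Finset.sum_nonneg fun i _ => hw1 i j), ?_⟩
      have hstep : ∑ j ∈ S, (1 + ∑ i ∈ S, w i j) • D j
          = (∑ j ∈ S, D j) + ∑ i ∈ S, ∑ j ∈ S, w i j • D j := by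
        rw [Finset.sum_comm (f := fun i j => w i j • D j), ← Finset.sum_add_distrib]
        refine Finset.sum_congr rfl fun j _ => ?_
        rw [add_smul, one_smul, Finset.sum_smul]
      rw [hstep]
      have h4 : ∑ i ∈ S, ∑ j ∈ S, w i j • D j = ∑ i ∈ S, -D i :=
        Finset.sum_congr rfl fun i hi => (hw2 i hi).symm
      rw [h4, Finset.sum_neg_distrib]
      simp
  -- (iii) → (i)
  have hCA : (spanK k D = (L : Set (Euc n)) ∧
      ∀ S : Finset ι, S.card = Fintype.card ι - k + 1 →
        ∃ c : ι → ℝ, (∀ i ∈ S, 0 < c i) ∧ ∑ i ∈ S, c i • D i = 0) → IsPkSS k D L := by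
    rintro ⟨hspan, hposc⟩
    rw [hiff]
    intro S hS x hx
    obtain ⟨S₀, hS₀sub, hS₀card⟩ := Finset.exists_subset_card_eq hS
    obtain ⟨c, hcpos, hczero⟩ := hposc S₀ hS₀card
    have hxspan : x ∈ Submodule.span ℝ (D '' (S₀ : Set ι)) := by
      have hx' : x ∈ spanK k D := by rw [hspan]; exact hx
      exact Set.mem_iInter.mp (Set.mem_iInter.mp hx' S₀) (le_of_eq hS₀card.symm)
    obtain ⟨a, rfl⟩ := PkssAux.mem_span_iff.mp hxspan
    have hS₀ne : S₀.Nonempty := Finset.card_pos.mp (by omega)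
    set t : ℝ := max 0 (S₀.sup' hS₀ne fun i => -a i / c i) with ht
    have htc : ∀ i ∈ S₀, 0 ≤ a i + t * c i := by
      intro i hi
      have h1 : -a i / c i ≤ t := le_max_of_le_right (Finset.le_sup' (fun i => -a i / c i) hi)
      have h2 : 0 < c i := hcpos i hi
      have h3 : -a i ≤ t * c i := by rwa [div_le_iff₀ h2] at h1
      linarith
    refine PkssAux.mem_pspan_iff.mpr ⟨fun i => if i ∈ S₀ then a i + t * c i else 0,
      fun i => ?_, ?_⟩
    · show (0:ℝ) ≤ if i ∈ S₀ then a i + t * c i else 0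
      by_cases h : i ∈ S₀
      · rw [if_pos h]; exact htc i h
      · rw [if_neg h]
    · show (∑ i ∈ S₀, a i • D i) = ∑ i ∈ S, (if i ∈ S₀ then a i + t * c i else 0) • D i
      rw [← Finset.sum_subset hS₀sub (fun j _ hj => by
        show (if j ∈ S₀ then a j + t * c j else 0) • D j = 0
        rw [if_neg hj, zero_smul])]
      have hcongr : ∑ i ∈ S₀, (if i ∈ S₀ then a i + t * c i else 0) • D i
          = ∑ i ∈ S₀, (a i + t * c i) • D i :=
        Finset.sum_congr rfl fun i hi => by rw [if_pos hi]
      rw [hcongr]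
      have hsplit : ∑ i ∈ S₀, (a i + t * c i) • D i
          = (∑ i ∈ S₀, a i • D i) + t • ∑ i ∈ S₀, c i • D i := by
        rw [Finset.smul_sum, ← Finset.sum_add_distrib]
        exact Finset.sum_congr rfl fun i _ => by rw [add_smul, mul_smul]
      rw [hsplit, hczero, smul_zero, add_zero]
  exact ⟨⟨hAB, hBA⟩, ⟨hAC, hCA⟩⟩
end
end

section
/- Let 𝕃 be a linear subspace of ℝ^n and let the finite family D of nonzero vectors in 𝕃 be a positive k-spanning set of 𝕃. Then for every d ∈ D, the k-span of the family D \ {d} (obtained by removing one instance of d) equals 𝕃. -/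
open scoped RealInnerProductSpace

noncomputable section

lemma pspan_subset_span {n : ℕ} {ι : Type*} [Fintype ι] (D : ι → Euc n) :
    pspan D ⊆ (Submodule.span ℝ (Set.range D) : Set (Euc n)) := by
  rintro x ⟨c, hc, rfl⟩
  exact Submodule.sum_mem _ fun i _ =>
    Submodule.smul_mem _ _ (Submodule.subset_span ⟨i, rfl⟩)

/-- Lemma 4.4: if `D` is a positive `k`-spanning set of `L`, then
for every `d ∈ D` the `k`-span of the family obtained by removing one instance of
`d` equals `L`. -/
theorem kspan_of_pkss_erase {n : ℕ} {ι : Type*} [Fintype ι] [DecidableEq ι]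
    (L : Submodule ℝ (Euc n)) (D : ι → Euc n)
    (hmem : ∀ i, D i ∈ L) (h0 : ∀ i, D i ≠ 0)
    (k : ℕ) (hk : 1 ≤ k) (hD : IsPkSS k D L) (i₀ : ι) :
    spanK k (fun j : {j : ι // j ≠ i₀} => D (j : ι)) = (L : Set (Euc n)) := by
  have hDL : (pspanK k D) = (L : Set (Euc n)) := hD
  -- key fact: for any S' : Finset ι with the card condition, L ⊆ pspan of S'
  have hL_sub : ∀ (S' : Finset ι), Fintype.card ι - k + 1 ≤ S'.card →
      (L : Set (Euc n)) ⊆ pspan (fun j : {j : ι // j ∈ S'} => D (j : ι)) := by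
    intro S' hS' x hx
    rw [← hDL] at hx
    exact Set.mem_iInter.1 (Set.mem_iInter.1 hx S') hS'
  have hcard1 : Fintype.card {j : ι // j ≠ i₀} = Fintype.card ι - 1 := by
    have := Fintype.card_subtype_compl (fun j : ι => j = i₀)
    simpa [Fintype.card_subtype_eq] using this
  apply Set.Subset.antisymm
  · -- spanK ⊆ L
    by_cases hne : Nonempty {j : ι // j ≠ i₀}
    · intro x hx
      have hcond : Fintype.card {j : ι // j ≠ i₀} - k + 1 ≤
          (Finset.univ : Finset {j : ι // j ≠ i₀}).card := by
        rw [Finset.card_univ]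
        have : 1 ≤ Fintype.card {j : ι // j ≠ i₀} := Fintype.card_pos
        omega
      have hx' := Set.mem_iInter.1 (Set.mem_iInter.1 hx Finset.univ) hcond
      have : Submodule.span ℝ
          ((fun j : {j : ι // j ≠ i₀} => D (j : ι)) ''
            ((Finset.univ : Finset {j : ι // j ≠ i₀}) : Set _)) ≤ L := by
        rw [Submodule.span_le]
        rintro y ⟨j, -, rfl⟩
        exact hmem j
      exact this hx'
    · -- subtype empty: every j = i₀, contradiction with pspan of {i₀} = L
      exfalso
      have hall : ∀ j : ι, j = i₀ := by
        intro j
        by_contra hj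
        exact hne ⟨⟨j, hj⟩⟩
      have hcardι : Fintype.card ι = 1 := by
        rw [Fintype.card_eq_one_iff]; exact ⟨i₀, hall⟩
      have hcond : Fintype.card ι - k + 1 ≤ ({i₀} : Finset ι).card := by
        simp [hcardι]; omega
      have hneg : -D i₀ ∈ (L : Set (Euc n)) := neg_mem (hmem i₀)
      obtain ⟨c, hc, heq⟩ := hL_sub {i₀} hcond hneg
      have hsum : -D i₀ = (∑ j : {j : ι // j ∈ ({i₀} : Finset ι)}, c j) • D i₀ := by
        rw [heq, Finset.sum_smul]
        refine Finset.sum_congr rfl fun j _ => ?_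
        have hji : (j : ι) = i₀ := Finset.mem_singleton.1 j.2
        show c j • D (j : ι) = c j • D i₀
        rw [hji]
      have hcpos : 0 ≤ ∑ j : {j : ι // j ∈ ({i₀} : Finset ι)}, c j :=
        Finset.sum_nonneg fun j _ => hc j
      set t := ∑ j : {j : ι // j ∈ ({i₀} : Finset ι)}, c j
      have : (t + 1) • D i₀ = 0 := by
        linear_combination (norm := module) -hsum
      have ht : t + 1 ≠ 0 := by positivity
      exact h0 i₀ (by
        have := smul_eq_zero.1 this
        tauto)
  · -- L ⊆ spanK
    intro x hx
    refine Set.mem_iInter.2 fun S => Set.mem_iInter.2 fun hS => ?_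
    -- S : Finset {j // j ≠ i₀}
    set T : Finset ι := S.image Subtype.val with hT
    have hi₀T : i₀ ∉ T := by
      simp only [hT, Finset.mem_image]
      rintro ⟨j, -, hj⟩
      exact j.2 hj
    set S' : Finset ι := insert i₀ T with hS'
    have hcardT : T.card = S.card := Finset.card_image_of_injective _ Subtype.val_injective
    have hcardS' : S'.card = S.card + 1 := by
      rw [hS', Finset.card_insert_of_notMem hi₀T, hcardT]
    have hcond : Fintype.card ι - k + 1 ≤ S'.card := by
      rw [hcardS']
      rw [hcard1] at hS
      omega
    -- D i₀ ∈ span (D '' T)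
    have hnegmem : -D i₀ ∈ pspan (fun j : {j : ι // j ∈ S'} => D (j : ι)) :=
      hL_sub S' hcond (neg_mem (hmem i₀))
    obtain ⟨c, hc, hceq⟩ := hnegmem
    -- rewrite sum over subtype of S' as sum over S'
    have hceq' : -D i₀ = ∑ j ∈ S', (fun j => if h : j ∈ S' then c ⟨j, h⟩ else 0) j • D j := by
      rw [hceq]
      rw [← Finset.sum_coe_sort S' (fun j => (if h : j ∈ S' then c ⟨j, h⟩ else 0) • D j)]
      refine Finset.sum_congr rfl fun j _ => ?_
      simp [j.2]
    set c' : ι → ℝ := fun j => if h : j ∈ S' then c ⟨j, h⟩ else 0 with hc'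
    have hc'nn : ∀ j, 0 ≤ c' j := by
      intro j; rw [hc']; dsimp only; split
      · exact hc _
      · exact le_refl 0
    have hsplit : -D i₀ = c' i₀ • D i₀ + ∑ j ∈ T, c' j • D j := by
      rw [hceq', hS', Finset.sum_insert hi₀T]
    have hDspan : D i₀ ∈ Submodule.span ℝ (D '' (T : Set ι)) := by
      have key : (c' i₀ + 1) • D i₀ = -(∑ j ∈ T, c' j • D j) := by
        rw [add_smul, one_smul]
        have := hsplit
        linear_combination (norm := module) -this
      have hpos : c' i₀ + 1 ≠ 0 := by
        have := hc'nn i₀; positivity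
      have hmem' : (c' i₀ + 1) • D i₀ ∈ Submodule.span ℝ (D '' (T : Set ι)) := by
        rw [key]
        exact neg_mem (Submodule.sum_mem _ fun j hj =>
          Submodule.smul_mem _ _ (Submodule.subset_span ⟨j, by simpa using hj, rfl⟩))
      have := Submodule.smul_mem _ (c' i₀ + 1)⁻¹ hmem'
      rwa [inv_smul_smul₀ hpos] at this
    -- x ∈ span (D '' S') and D '' S' collapses into span (D '' T)
    have hxS' : x ∈ Submodule.span ℝ (D '' (S' : Set ι)) := by
      have h1 := hL_sub S' hcond hx
      have h2 := pspan_subset_span (fun j : {j : ι // j ∈ S'} => D (j : ι)) h1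
      have hrange : Set.range (fun j : {j : ι // j ∈ S'} => D (j : ι)) = D '' (S' : Set ι) := by
        ext y; constructor
        · rintro ⟨j, rfl⟩; exact ⟨j, j.2, rfl⟩
        · rintro ⟨j, hj, rfl⟩; exact ⟨⟨j, hj⟩, rfl⟩
      rwa [hrange] at h2
    have hspan_le : Submodule.span ℝ (D '' (S' : Set ι)) ≤
        Submodule.span ℝ (D '' (T : Set ι)) := by
      rw [Submodule.span_le]
      rintro y ⟨j, hj, rfl⟩
      rw [hS'] at hj
      simp only [Finset.coe_insert, Set.mem_insert_iff] at hj
      rcases hj with rfl | hj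
      · exact hDspan
      · exact Submodule.subset_span ⟨j, hj, rfl⟩
    have hxT : x ∈ Submodule.span ℝ (D '' (T : Set ι)) := hspan_le hxS'
    -- identify with goal set
    have himg : (fun j : {j : ι // j ≠ i₀} => D (j : ι)) '' (S : Set _) = D '' (T : Set ι) := by
      ext y; constructor
      · rintro ⟨j, hj, rfl⟩; exact ⟨j, by simp only [hT, Finset.coe_image, Set.mem_image, Finset.mem_coe]; exact ⟨j, hj, rfl⟩, rfl⟩
      · rintro ⟨j, hj, rfl⟩
        rw [hT] at hj
        simp only [Finset.coe_image, Set.mem_image, Finset.mem_coe] at hj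
        obtain ⟨j', hj', rfl⟩ := hj
        exact ⟨j', hj', rfl⟩
    rw [himg]
    exact hxT
end
end

section
/- Let D be a nonempty finite family of nonzero vectors in ℝ^n and let k be an integer with 1 ≤ k ≤ |D|. Then the k-cosine measure of D equals the minimum of the cosine measures of its subfamilies of cardinality |D| - k + 1: cm_k(D) = min { cm(S) : S ⊆ D, |S| = |D| - k + 1 }. -/
open scoped RealInnerProductSpace

noncomputable section

lemma aux_inter_nonempty {ι : Type*} [Fintype ι] [DecidableEq ι] {S T : Finset ι}
    (h : Fintype.card ι < S.card + T.card) : (S ∩ T).Nonempty := by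
  rw [← Finset.card_pos]
  have h1 : (S ∪ T).card ≤ Fintype.card ι := by
    simpa using Finset.card_le_card (Finset.subset_univ (S ∪ T))
  have := Finset.card_union_add_card_inter S T
  omega

lemma aux_minimax {ι : Type*} [Fintype ι] (f : ι → ℝ) (k : ℕ)
    (hk1 : 1 ≤ k) (hk2 : k ≤ Fintype.card ι) :
    (⨆ S : {S : Finset ι // S.card = k}, ⨅ j : {j : ι // j ∈ (S : Finset ι)}, f j)
      = ⨅ T : {T : Finset ι // T.card = Fintype.card ι - k + 1},
          ⨆ j : {j : ι // j ∈ (T : Finset ι)}, f j := by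
  classical
  set N := Fintype.card ι with hN
  set m := N - k + 1 with hm
  have hm2 : m ≤ N := by omega
  have hSne : Nonempty {S : Finset ι // S.card = k} := by
    obtain ⟨S, _, hS⟩ := Finset.exists_subset_card_eq (s := Finset.univ) (n := k) (by simpa using hk2)
    exact ⟨⟨S, hS⟩⟩
  have hTne : Nonempty {T : Finset ι // T.card = m} := by
    obtain ⟨T, _, hT⟩ := Finset.exists_subset_card_eq (s := Finset.univ) (n := m) (by simpa using hm2)
    exact ⟨⟨T, hT⟩⟩
  have hjS : ∀ S : {S : Finset ι // S.card = k}, Nonempty {j : ι // j ∈ (S : Finset ι)} := by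
    intro S
    obtain ⟨j, hj⟩ := Finset.card_pos.mp (by rw [S.2]; omega)
    exact ⟨⟨j, hj⟩⟩
  have hjT : ∀ T : {T : Finset ι // T.card = m}, Nonempty {j : ι // j ∈ (T : Finset ι)} := by
    intro T
    obtain ⟨j, hj⟩ := Finset.card_pos.mp (by rw [T.2]; omega)
    exact ⟨⟨j, hj⟩⟩
  apply le_antisymm
  · apply ciSup_le
    intro S
    apply le_ciInf
    intro T
    have := hjS S; have := hjT T
    obtain ⟨j, hj⟩ := aux_inter_nonempty (S := (S : Finset ι)) (T := (T : Finset ι))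
      (by rw [S.2, T.2]; omega)
    rw [Finset.mem_inter] at hj
    calc (⨅ j : {j : ι // j ∈ (S : Finset ι)}, f j) ≤ f j :=
          ciInf_le (f := fun j : {j : ι // j ∈ (S : Finset ι)} => f j)
            (Set.Finite.bddBelow (Set.finite_range _)) ⟨j, hj.1⟩
      _ ≤ ⨆ j : {j : ι // j ∈ (T : Finset ι)}, f j :=
          le_ciSup (f := fun j : {j : ι // j ∈ (T : Finset ι)} => f j)
            (Set.Finite.bddAbove (Set.finite_range _)) ⟨j, hj.2⟩
  · set t := ⨅ T : {T : Finset ι // T.card = m},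
          ⨆ j : {j : ι // j ∈ (T : Finset ι)}, f j with ht
    set A := Finset.univ.filter (fun j => t ≤ f j) with hA
    by_cases hcard : k ≤ A.card
    · obtain ⟨S, hSA, hS⟩ := Finset.exists_subset_card_eq (s := A) (n := k) hcard
      refine le_trans ?_ (le_ciSup (Set.Finite.bddAbove (Set.finite_range _)) ⟨S, hS⟩)
      have : Nonempty {j : ι // j ∈ S} := hjS ⟨S, hS⟩
      apply le_ciInf
      intro j
      have := hSA j.2
      rw [hA, Finset.mem_filter] at this
      exact this.2
    · exfalso
      have hAc : m ≤ Aᶜ.card := by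
        have := Finset.card_compl A
        omega
      obtain ⟨T, hTA, hT⟩ := Finset.exists_subset_card_eq (s := Aᶜ) (n := m) hAc
      have hTle : t ≤ ⨆ j : {j : ι // j ∈ T}, f j :=
        ciInf_le (f := fun T : {T : Finset ι // T.card = m} =>
            ⨆ j : {j : ι // j ∈ (T : Finset ι)}, f j)
          (Set.Finite.bddBelow (Set.finite_range _)) ⟨T, hT⟩
      have : Nonempty {j : ι // j ∈ T} := hjT ⟨T, hT⟩
      have hTne' : T.Nonempty := ⟨this.some, this.some.2⟩
      obtain ⟨j0, hj0T, hj0⟩ := Finset.exists_max_image T f hTne'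
      have hsup : (⨆ j : {j : ι // j ∈ T}, f j) ≤ f j0 := by
        apply ciSup_le; intro j; exact hj0 j j.2
      have : j0 ∈ Aᶜ := hTA hj0T
      rw [Finset.mem_compl, hA, Finset.mem_filter] at this
      push_neg at this
      have := this (Finset.mem_univ j0)
      linarith

lemma aux_iInf_comm_le {α β : Type*} [Nonempty α] [Nonempty β] (g : α → β → ℝ)
    (c : ℝ) (hg : ∀ a b, c ≤ g a b) :
    (⨅ b, ⨅ a, g a b) ≤ ⨅ a, ⨅ b, g a b := by
  apply le_ciInf; intro a
  apply le_ciInf; intro b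
  calc (⨅ b, ⨅ a, g a b) ≤ ⨅ a, g a b := by
        apply ciInf_le _ b
        refine ⟨c, ?_⟩
        rintro x ⟨b', rfl⟩
        exact le_ciInf (fun a' => hg a' b')
    _ ≤ g a b := ciInf_le ⟨c, by rintro x ⟨a', rfl⟩; exact hg a' b⟩ a

lemma aux_iInf_comm {α β : Type*} [Nonempty α] [Nonempty β] (h : α → β → ℝ)
    (c : ℝ) (hb : ∀ a b, c ≤ h a b) :
    ⨅ a, ⨅ b, h a b = ⨅ b, ⨅ a, h a b :=
  le_antisymm (aux_iInf_comm_le (fun b a => h a b) c (fun b a => hb a b))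
    (aux_iInf_comm_le h c hb)

/-- Theorem 4.9: the `k`-cosine measure of `D` equals the minimum
of the cosine measures of its subfamilies of cardinality `|D| - k + 1`. -/
theorem cosmK_eq_min_cosm {n : ℕ} {ι : Type*} [Fintype ι] [Nonempty ι]
    (D : ι → Euc n) (h0 : ∀ i, D i ≠ 0)
    (k : ℕ) (hk1 : 1 ≤ k) (hk2 : k ≤ Fintype.card ι) :
    cosmK k D = ⨅ S : {S : Finset ι // S.card = Fintype.card ι - k + 1},
      cosm (fun j : {j : ι // j ∈ (S : Finset ι)} => D (j : ι)) := by
  classical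
  have hn : n ≠ 0 := by
    rintro rfl
    exact h0 (Classical.arbitrary ι) (Subsingleton.elim _ _)
  haveI hU : Nonempty {u : Euc n // ‖u‖ = 1} :=
    ⟨⟨EuclideanSpace.single (⟨0, Nat.pos_of_ne_zero hn⟩ : Fin n) (1 : ℝ), by simp⟩⟩
  set m := Fintype.card ι - k + 1 with hm
  haveI hT : Nonempty {T : Finset ι // T.card = m} := by
    obtain ⟨T, _, hT⟩ := Finset.exists_subset_card_eq
      (s := (Finset.univ : Finset ι)) (n := m) (by simp; omega)
    exact ⟨⟨T, hT⟩⟩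
  have hterm : ∀ (u : {u : Euc n // ‖u‖ = 1}) (i : ι),
      -1 ≤ ⟪(u : Euc n), D i⟫ / ‖D i‖ := by
    intro u i
    have hd : (0 : ℝ) < ‖D i‖ := norm_pos_iff.mpr (h0 i)
    rw [le_div_iff₀ hd]
    have := abs_real_inner_le_norm (u : Euc n) (D i)
    have hu : ‖(u : Euc n)‖ = 1 := u.2
    rw [hu, one_mul] at this
    have := abs_le.mp this
    linarith [this.1]
  have hbound : ∀ (u : {u : Euc n // ‖u‖ = 1}) (T : {T : Finset ι // T.card = m}),
      -1 ≤ ⨆ j : {j : ι // j ∈ (T : Finset ι)}, ⟪(u : Euc n), D (j : ι)⟫ / ‖D (j : ι)‖ := by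
    intro u T
    obtain ⟨j, hj⟩ := Finset.card_pos.mp (by rw [T.2]; omega)
    exact le_trans (hterm u j)
      (le_ciSup (f := fun j : {j : ι // j ∈ (T : Finset ι)} =>
        ⟪(u : Euc n), D (j : ι)⟫ / ‖D (j : ι)‖)
        (Set.Finite.bddAbove (Set.finite_range _)) ⟨j, hj⟩)
  have e1 : cosmK k D = ⨅ u : {u : Euc n // ‖u‖ = 1},
      ⨅ T : {T : Finset ι // T.card = m},
        ⨆ j : {j : ι // j ∈ (T : Finset ι)}, ⟪(u : Euc n), D (j : ι)⟫ / ‖D (j : ι)‖ :=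
    iInf_congr (fun u =>
      aux_minimax (fun i => ⟪(u : Euc n), D i⟫ / ‖D i‖) k hk1 hk2)
  rw [e1, aux_iInf_comm _ (-1) hbound]
  rfl
end
end

section
/- Let D be an orthogonally structured positive basis of ℝ^n with n+s elements, s ∈ {1,…,n}. Let R^(1), …, R^(k) be k rotation matrices in ℝ^{n×n}, and for each j = 1,…,k let D^(j) = { R^(j) d : d ∈ D } (as a family). Then the family D^(1:k) = D^(1) ∪ ⋯ ∪ D^(k) is a positive k-spanning set of ℝ^n and its k-cosine measure satisfies cm_k(D^(1:k)) ≥ cm(D). -/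
open scoped RealInnerProductSpace

noncomputable section

section AuxLemmas

lemma rotAct_apply' {n : ℕ} (R : Matrix (Fin n) (Fin n) ℝ) (x : Euc n) (i : Fin n) :
    rotAct R x i = R.mulVec x i := rfl

lemma inner_eq_dot' {n : ℕ} (x y : Euc n) :
    ⟪x,y⟫ = dotProduct (x : Fin n → ℝ) y := by
  simp [inner, RCLike.inner_apply, dotProduct, mul_comm]

lemma rotAct_coe' {n : ℕ} (R : Matrix (Fin n) (Fin n) ℝ) (x : Euc n) :
    (rotAct R x : Fin n → ℝ) = R.mulVec x := rfl

lemma rotAct_inner' {n : ℕ} (R : Matrix (Fin n) (Fin n) ℝ) (hR : R.transpose * R = 1)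
    (x y : Euc n) : ⟪rotAct R x, rotAct R y⟫ = ⟪x, y⟫ := by
  rw [inner_eq_dot', inner_eq_dot', rotAct_coe', rotAct_coe', Matrix.dotProduct_mulVec,
    Matrix.vecMul_mulVec, hR, Matrix.vecMul_one]

lemma rotAct_norm' {n : ℕ} (R : Matrix (Fin n) (Fin n) ℝ) (hR : R.transpose * R = 1)
    (x : Euc n) : ‖rotAct R x‖ = ‖x‖ := by
  have h := rotAct_inner' R hR x x
  rw [real_inner_self_eq_norm_mul_norm, real_inner_self_eq_norm_mul_norm] at h
  have := congrArg Real.sqrt h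
  rwa [Real.sqrt_mul_self (norm_nonneg _), Real.sqrt_mul_self (norm_nonneg _)] at this

lemma rotAct_transpose_inner' {n : ℕ} (R : Matrix (Fin n) (Fin n) ℝ)
    (x d : Euc n) : ⟪rotAct R.transpose x, d⟫ = ⟪x, rotAct R d⟫ := by
  rw [inner_eq_dot', inner_eq_dot', rotAct_coe', rotAct_coe', Matrix.mulVec_transpose,
    ← Matrix.dotProduct_mulVec]

lemma rotAct_rotAct' {n : ℕ} (A B : Matrix (Fin n) (Fin n) ℝ) (x : Euc n) :
    rotAct A (rotAct B x) = rotAct (A * B) x := by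
  ext i
  rw [rotAct_apply', rotAct_apply', rotAct_coe', ← Matrix.mulVec_mulVec]

lemma rotAct_one' {n : ℕ} (x : Euc n) : rotAct (1 : Matrix (Fin n) (Fin n) ℝ) x = x := by
  ext i; rw [rotAct_apply', Matrix.one_mulVec]

lemma pspan_subset_of_embed' {n : ℕ} {ι κ : Type*} [Fintype ι] [Fintype κ]
    (E : ι → Euc n) (F : κ → Euc n) (e : ι → κ) (he : Function.Injective e)
    (hF : ∀ a, F (e a) = E a) : pspan E ⊆ pspan F := by
  classical
  rintro x ⟨c, hc, rfl⟩
  refine ⟨fun b => if h : ∃ a, e a = b then c h.choose else 0, ?_, ?_⟩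
  · intro b; dsimp only; split
    · exact hc _
    · exact le_refl 0
  · have key : ∀ a : ι, (if h : ∃ a', e a' = e a then c h.choose else 0) = c a := by
      intro a
      rw [dif_pos ⟨a, rfl⟩]
      congr 1
      exact he (⟨a, rfl⟩ : ∃ a', e a' = e a).choose_spec
    dsimp only
    rw [← Finset.sum_subset (Finset.subset_univ (Finset.univ.image e))]
    · rw [Finset.sum_image (fun a _ b _ h => he h)]
      exact (Finset.sum_congr rfl fun a _ => by rw [key a, hF a]).symm
    · intro b _ hb
      rw [dif_neg, zero_smul]
      rintro ⟨a, rfl⟩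
      exact hb (Finset.mem_image_of_mem e (Finset.mem_univ a))

lemma zero_mem_pspan' {n : ℕ} {ι : Type*} [Fintype ι] (D : ι → Euc n) :
    (0 : Euc n) ∈ pspan D := ⟨0, fun _ => le_refl 0, by simp⟩

lemma add_mem_pspan' {n : ℕ} {ι : Type*} [Fintype ι] {D : ι → Euc n} {x y : Euc n}
    (hx : x ∈ pspan D) (hy : y ∈ pspan D) : x + y ∈ pspan D := by
  obtain ⟨c, hc, rfl⟩ := hx
  obtain ⟨c', hc', rfl⟩ := hy
  exact ⟨c + c', fun i => add_nonneg (hc i) (hc' i), by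
    simp [add_smul, Finset.sum_add_distrib]⟩

lemma neg_one_le_cos' {n : ℕ} (u d : Euc n) (hu : ‖u‖ = 1) (hd : d ≠ 0) :
    -1 ≤ ⟪u, d⟫ / ‖d‖ := by
  have hdn : (0:ℝ) < ‖d‖ := norm_pos_iff.mpr hd
  rw [le_div_iff₀ hdn]
  have h1 := abs_real_inner_le_norm u d
  rw [hu, one_mul] at h1
  have h2 := neg_abs_le ⟪u, d⟫
  linarith

end AuxLemmas

/-- Proposition 4.10: let `D` be an OSPB of `ℝ^n` with `n+s`
elements (`1 ≤ s ≤ n`) and let `R^(1), …, R^(k)` be rotation matrices. Then the union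
of the rotated families `D^(j) = {R^(j) d : d ∈ D}` is a positive `k`-spanning set of
`ℝ^n` whose `k`-cosine measure is at least `cm(D)`. -/
theorem rotated_ospb_is_pkss {n s k : ℕ} (hs1 : 1 ≤ s) (hsn : s ≤ n) (hk : 1 ≤ k)
    (D : Fin (n + s) → Euc n) (h0 : ∀ i, D i ≠ 0)
    (L : Fin s → Submodule ℝ (Euc n)) (g : Fin (n + s) → Fin s)
    (hospb : IsOSPBDecomp D L g)
    (R : Fin k → Matrix (Fin n) (Fin n) ℝ) (hrot : ∀ j, IsRotation (R j)) :
    IsPkSS k (fun p : Fin k × Fin (n + s) => rotAct (R p.1) (D p.2))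
      (⊤ : Submodule ℝ (Euc n)) ∧
    cosm D ≤ cosmK k (fun p : Fin k × Fin (n + s) => rotAct (R p.1) (D p.2)) := by
  classical
  set fam : Fin k × Fin (n + s) → Euc n := fun p => rotAct (R p.1) (D p.2) with hfam
  -- every vector is in the positive span of D
  have hDtop : ∀ x : Euc n, x ∈ pspan D := by
    intro x
    have hx : x ∈ ⨆ i, L i := by rw [hospb.2.1]; trivial
    refine Submodule.iSup_induction L (motive := fun y => y ∈ pspan D) hx ?_ (zero_mem_pspan' D)
      (fun a b ha hb => add_mem_pspan' ha hb)
    intro i x hxLi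
    have hPSS : pspan (fun j : {j : Fin (n+s) // g j = i} => D (j : Fin (n+s)))
        = (L i : Set (Euc n)) := (hospb.2.2 i).1.1
    have hxp : x ∈ pspan (fun j : {j : Fin (n+s) // g j = i} => D (j : Fin (n+s))) := by
      rw [hPSS]; exact hxLi
    exact pspan_subset_of_embed' _ D Subtype.val Subtype.val_injective (fun a => rfl) hxp
  -- each rotated copy positively spans everything
  have hrotspan : ∀ j : Fin k, ∀ x : Euc n,
      x ∈ pspan (fun i : Fin (n+s) => rotAct (R j) (D i)) := by
    intro j x
    have hR := (hrot j).1
    have hR' : R j * (R j).transpose = 1 := mul_eq_one_comm.mp hR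
    obtain ⟨c, hc, hsum⟩ := hDtop (rotAct (R j).transpose x)
    refine ⟨c, hc, ?_⟩
    have hfix : rotAct (R j) (rotAct (R j).transpose x) = x := by
      rw [rotAct_rotAct', hR', rotAct_one']
    rw [← hfix, hsum]
    simp only [rotAct, map_sum, map_smul]
  have hk' : k ≤ k * (n + s) := Nat.le_mul_of_pos_right k (by omega)
  have hcard_univ : Fintype.card (Fin k × Fin (n + s)) = k * (n + s) := by simp
  constructor
  · -- PkSS
    show pspanK k fam = ((⊤ : Submodule ℝ (Euc n)) : Set (Euc n))
    rw [Submodule.top_coe]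
    apply Set.eq_univ_of_univ_subset
    intro x _
    refine Set.mem_iInter₂.mpr ?_
    intro S hS
    rw [hcard_univ] at hS
    have h1 : S.card ≤ k * (n + s) := by
      have := Finset.card_le_univ S; rwa [hcard_univ] at this
    have h2 : Sᶜ.card = k * (n + s) - S.card := by
      rw [Finset.card_compl, hcard_univ]
    obtain ⟨j, hj⟩ : ∃ j : Fin k, ∀ i, (j, i) ∈ S := by
      by_contra hcon
      push_neg at hcon
      have hsub : (Finset.univ : Finset (Fin k)) ⊆ Sᶜ.image Prod.fst := by
        intro j _
        obtain ⟨i, hi⟩ := hcon j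
        exact Finset.mem_image.mpr ⟨(j, i), Finset.mem_compl.mpr hi, rfl⟩
      have h3 := Finset.card_le_card hsub
      have h4 := Finset.card_image_le (s := Sᶜ) (f := Prod.fst)
      rw [Finset.card_univ, Fintype.card_fin] at h3
      omega
    exact pspan_subset_of_embed' (fun i : Fin (n+s) => rotAct (R j) (D i))
      (fun p : {p : Fin k × Fin (n+s) // p ∈ S} => fam (p : Fin k × Fin (n+s)))
      (fun i => ⟨(j, i), hj i⟩)
      (fun a b h => by
        simpa using congrArg (fun p : {p : Fin k × Fin (n+s) // p ∈ S} =>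
          (p : Fin k × Fin (n+s)).2) h)
      (fun a => rfl) (hrotspan j x)
  · -- cosine measure bound
    have hnpos : 0 < n := by omega
    have : Nonempty {u : Euc n // ‖u‖ = 1} :=
      ⟨⟨EuclideanSpace.single (⟨0, hnpos⟩ : Fin n) (1:ℝ), by simp⟩⟩
    have hne : Nonempty (Fin (n+s)) := ⟨⟨0, by omega⟩⟩
    have hbdd : BddBelow (Set.range fun u : {u : Euc n // ‖u‖ = 1} =>
        ⨆ i : Fin (n+s), ⟪(u : Euc n), D i⟫ / ‖D i‖) := by
      refine ⟨-1, ?_⟩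
      rintro _ ⟨u, rfl⟩
      obtain ⟨i0⟩ := hne
      have hbA : BddAbove (Set.range (fun i : Fin (n+s) => ⟪(u : Euc n), D i⟫ / ‖D i‖)) :=
        Set.Finite.bddAbove (Set.finite_range _)
      exact le_ciSup_of_le hbA i0 (neg_one_le_cos' (u : Euc n) (D i0) u.2 (h0 i0))
    refine le_ciInf ?_
    intro u
    have key : ∀ j : Fin k, ∃ i : Fin (n+s),
        cosm D ≤ ⟪(u : Euc n), fam (j, i)⟫ / ‖fam (j, i)‖ := by
      intro j
      have hR := (hrot j).1
      have hRT : (R j).transpose.transpose * (R j).transpose = 1 := by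
        rw [Matrix.transpose_transpose]; exact mul_eq_one_comm.mp hR
      set uj : Euc n := rotAct (R j).transpose u with huj
      have hujn : ‖uj‖ = 1 := by rw [huj, rotAct_norm' _ hRT, u.2]
      have h1 : cosm D ≤ ⨆ i : Fin (n+s), ⟪uj, D i⟫ / ‖D i‖ := ciInf_le hbdd ⟨uj, hujn⟩
      obtain ⟨i0, hi0⟩ := Finite.exists_max (fun i : Fin (n+s) => ⟪uj, D i⟫ / ‖D i‖)
      refine ⟨i0, ?_⟩
      have h2 : (⨆ i : Fin (n+s), ⟪uj, D i⟫ / ‖D i‖) ≤ ⟪uj, D i0⟫ / ‖D i0‖ := ciSup_le hi0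
      have h3 : ⟪uj, D i0⟫ = ⟪(u : Euc n), fam (j, i0)⟫ := by
        rw [huj]; exact rotAct_transpose_inner' (R j) u (D i0)
      have h4 : ‖fam (j, i0)‖ = ‖D i0‖ := rotAct_norm' _ hR _
      rw [← h3, h4]
      exact h1.trans h2
    choose m hm using key
    have hminj : Function.Injective (fun j : Fin k => (j, m j)) := by
      intro a b h
      exact congrArg Prod.fst h
    set S : Finset (Fin k × Fin (n+s)) := Finset.univ.image (fun j => (j, m j)) with hSdef
    have hScard : S.card = k := by
      rw [hSdef, Finset.card_image_of_injective _ hminj, Finset.card_univ, Fintype.card_fin]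
    have hSne : Nonempty {p : Fin k × Fin (n+s) // p ∈ S} := by
      have hpos : (0:ℕ) < S.card := by rw [hScard]; omega
      obtain ⟨p, hp⟩ := Finset.card_pos.mp hpos
      exact ⟨⟨p, hp⟩⟩
    refine le_ciSup_of_le (Set.Finite.bddAbove (Set.finite_range _)) ⟨S, hScard⟩ ?_
    refine le_ciInf ?_
    rintro ⟨p, hp⟩
    have hp' : p ∈ Finset.univ.image (fun j : Fin k => (j, m j)) := hp
    obtain ⟨j, _, rfl⟩ := Finset.mem_image.mp hp'
    exact hm j
end
end

section
/- Let 𝕃 be an ℓ-dimensional linear subspace of ℝ^n (ℓ ≥ 1) and let D = {d_1, …, d_{ℓ+1}} be a minimal positive basis of 𝕃. Then there exist vectors v_1, …, v_{ℓ+1} ∈ 𝕃 such that d_iᵀ v_i > 0 for all i ∈ {1,…,ℓ+1}, and d_iᵀ v_j < 0 for all 1 ≤ j < i ≤ ℓ+1. -/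
open scoped RealInnerProductSpace

noncomputable section

/-- Lemma 4.12: for a minimal positive basis `{d_1, …, d_{ℓ+1}}`
of an `ℓ`-dimensional subspace `L` of `ℝ^n`, there exist `v_1, …, v_{ℓ+1} ∈ L`
with `⟪d_i, v_i⟫ > 0` for all `i` and `⟪d_i, v_j⟫ < 0` whenever `j < i`. -/
theorem minimal_pb_strict_separation {n ℓ : ℕ} (hℓ : 1 ≤ ℓ) (hn : ℓ ≤ n)
    (L : Submodule ℝ (Euc n)) (hdim : Module.finrank ℝ L = ℓ)
    (D : Fin (ℓ + 1) → Euc n) (h0 : ∀ i, D i ≠ 0)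
    (hD : IsMinPosBasis D L) :
    ∃ v : Fin (ℓ + 1) → Euc n, (∀ i, v i ∈ L) ∧
      (∀ i, 0 < ⟪D i, v i⟫) ∧
      ∀ i j : Fin (ℓ + 1), j < i → ⟪D i, v j⟫ < 0 := by
  classical
  obtain ⟨⟨hPSS, _⟩, _⟩ := hD
  -- every D i lies in L
  have hmem : ∀ i, D i ∈ L := by
    intro i
    have hi : D i ∈ pspan D := by
      refine ⟨fun k => if k = i then 1 else 0, fun k => by positivity, ?_⟩
      simp [ite_smul]
    rw [IsPSS] at hPSS
    have hi2 : D i ∈ (L : Set (Euc n)) := hPSS ▸ hi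
    exact hi2
  rw [IsPSS] at hPSS
  -- a strictly positive linear relation
  have hneg : ∀ j, ∃ c : Fin (ℓ+1) → ℝ, (∀ i, 0 ≤ c i) ∧ -D j = ∑ i, c i • D i := by
    intro j
    have : -D j ∈ pspan D := by
      rw [hPSS]; exact neg_mem (hmem j)
    exact this
  choose c hc hcs using hneg
  set α : Fin (ℓ+1) → ℝ := fun i => 1 + ∑ j, c j i with hα
  have hαpos : ∀ i, 0 < α i := by
    intro i
    have : (0:ℝ) ≤ ∑ j, c j i := Finset.sum_nonneg fun j _ => hc j i
    simp only [hα]; linarith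
  have hrel : ∑ i, α i • D i = 0 := by
    have : ∑ i, α i • D i = ∑ i, D i + ∑ j, ∑ i, c j i • D i := by
      rw [Finset.sum_comm (s := Finset.univ) (t := Finset.univ) (f := fun j i => c j i • D i)]
      rw [← Finset.sum_add_distrib]
      refine Finset.sum_congr rfl fun i _ => ?_
      simp [hα, add_smul, Finset.sum_smul]
    rw [this]
    have h2 : ∑ j, ∑ i, c j i • D i = ∑ j, -D j := by
      refine Finset.sum_congr rfl fun j _ => (hcs j).symm
    rw [h2, Finset.sum_neg_distrib]
    abel
  -- linear span facts
  have hspanD : Submodule.span ℝ (Set.range D) = L := by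
    apply le_antisymm
    · rw [Submodule.span_le]; rintro _ ⟨i, rfl⟩; exact hmem i
    · intro x hx
      have hx' : x ∈ pspan D := by rw [hPSS]; exact hx
      obtain ⟨cc, -, rfl⟩ := hx'
      exact Submodule.sum_mem _ fun i _ =>
        Submodule.smul_mem _ _ (Submodule.subset_span ⟨i, rfl⟩)
  have hspanj : ∀ j, Submodule.span ℝ (D '' {i | i ≠ j}) = L := by
    intro j
    have hDj : D j ∈ Submodule.span ℝ (D '' {i | i ≠ j}) := by
      have hsplit : α j • D j + ∑ i ∈ Finset.univ.erase j, α i • D i = 0 := by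
        rw [← hrel, Finset.add_sum_erase _ (fun i => α i • D i) (Finset.mem_univ j)]
      have h1 : α j • D j = -∑ i ∈ Finset.univ.erase j, α i • D i :=
        eq_neg_of_add_eq_zero_left hsplit
      have hmemspan : α j • D j ∈ Submodule.span ℝ (D '' {i | i ≠ j}) := by
        rw [h1]
        exact neg_mem (Submodule.sum_mem _ fun i hi =>
          Submodule.smul_mem _ _ (Submodule.subset_span ⟨i, Finset.ne_of_mem_erase hi, rfl⟩))
      have := Submodule.smul_mem _ (α j)⁻¹ hmemspan
      rwa [inv_smul_smul₀ (hαpos j).ne'] at this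
    apply le_antisymm
    · rw [Submodule.span_le]; rintro _ ⟨i, -, rfl⟩; exact hmem i
    · rw [← hspanD, Submodule.span_le]
      rintro _ ⟨i, rfl⟩
      by_cases hij : i = j
      · subst hij; exact hDj
      · exact Submodule.subset_span ⟨i, hij, rfl⟩
  -- construct v j
  have key : ∀ j : Fin (ℓ+1), ∃ w : Euc n, w ∈ L ∧ ∀ i, i ≠ j → ⟪D i, w⟫ = -1 := by
    intro j
    let φ : L →ₗ[ℝ] ({i : Fin (ℓ+1) // i ≠ j} → ℝ) :=
      { toFun := fun x i => ⟪D (i : Fin (ℓ+1)), (x : Euc n)⟫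
        map_add' := fun x y => by funext i; simp [inner_add_right]
        map_smul' := fun r x => by funext i; simp [inner_smul_right] }
    have hcard : Fintype.card {i : Fin (ℓ+1) // i ≠ j} = ℓ := by
      simp [Fintype.card_subtype_compl]
    have hfr : Module.finrank ℝ L = Module.finrank ℝ ({i : Fin (ℓ+1) // i ≠ j} → ℝ) := by
      rw [hdim, Module.finrank_fintype_fun_eq_card, hcard]
    have hinj : Function.Injective φ := by
      rw [← LinearMap.ker_eq_bot, Submodule.eq_bot_iff]
      rintro ⟨x, hxL⟩ hx
      have hx' : ∀ i : Fin (ℓ+1), i ≠ j → ⟪D i, x⟫ = 0 := by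
        intro i hij
        have := congrFun hx ⟨i, hij⟩
        simpa [φ] using this
      have hzero : ∀ y ∈ Submodule.span ℝ (D '' {i | i ≠ j}), ⟪y, x⟫ = 0 := by
        intro y hy
        induction hy using Submodule.span_induction with
        | mem y hy => obtain ⟨i, hij, rfl⟩ := hy; exact hx' i hij
        | zero => simp
        | add a b _ _ ha hb => rw [inner_add_left, ha, hb]; ring
        | smul r a _ ha => rw [inner_smul_left, ha]; simp
      have : ⟪x, x⟫ = 0 := hzero x (by rw [hspanj j]; exact hxL)
      have hx0 : x = 0 := by rwa [inner_self_eq_zero] at this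
      exact Subtype.ext hx0
    have hsurj : Function.Surjective φ :=
      (LinearMap.injective_iff_surjective_of_finrank_eq_finrank hfr).mp hinj
    obtain ⟨w, hw⟩ := hsurj (fun _ => -1)
    refine ⟨(w : Euc n), w.2, fun i hij => ?_⟩
    have := congrFun hw ⟨i, hij⟩
    simpa [φ] using this
  choose v hvL hvinner using key
  refine ⟨v, hvL, ?_, ?_⟩
  · -- positivity of diagonal
    intro j
    have hrelj : (0:ℝ) = α j * ⟪D j, v j⟫ + ∑ i ∈ Finset.univ.erase j, α i * ⟪D i, v j⟫ := by
      have h0' : ⟪∑ i, α i • D i, v j⟫ = 0 := by rw [hrel]; simp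
      rw [sum_inner] at h0'
      simp_rw [real_inner_smul_left] at h0'
      rw [← h0', Finset.add_sum_erase _ (fun i => α i * ⟪D i, v j⟫) (Finset.mem_univ j)]
    have hsum : ∑ i ∈ Finset.univ.erase j, α i * ⟪D i, v j⟫ =
        -∑ i ∈ Finset.univ.erase j, α i := by
      rw [← Finset.sum_neg_distrib]
      refine Finset.sum_congr rfl fun i hi => ?_
      rw [hvinner j i (Finset.ne_of_mem_erase hi)]
      ring
    have hpos : (0:ℝ) < ∑ i ∈ Finset.univ.erase j, α i := by
      refine Finset.sum_pos (fun i _ => hαpos i) ?_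
      rw [← Finset.card_pos, Finset.card_erase_of_mem (Finset.mem_univ j)]
      simp; omega
    rw [hsum] at hrelj
    have : α j * ⟪D j, v j⟫ = ∑ i ∈ Finset.univ.erase j, α i := by linarith
    have hx : 0 < α j * ⟪D j, v j⟫ := this ▸ hpos
    nlinarith [hx, hαpos j]
  · intro i j hji
    rw [hvinner j i (by exact fun h => absurd h (ne_of_gt hji))]
    norm_num
end
end
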